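/- arXiv:2201.02970 — 10 statements merged into one kernel-verified Lean document; each statement's English description precedes it below -/
import Mathlib

section
/- Let Y be a random variable with values in {0,1}^N and let X = X(Y) be a nonnegative function of complexity at most d. For every positive integer ℓ and all positive reals ε, δ with ε < 1+δ, P(X ≥ (1+δ)E[X] and Y ∉ F for all F ∈ 𝓕) ≤ ((1+δ−ε)/(1+δ))^ℓ, where 𝓕 is the collection of all subcubes F of codimension at most dℓ with E[X | Y ∈ F] ≥ (1+δ−ε)E[X]. -/
open MeasureTheory Finset



def cube {N : ℕ} (K : Finset (Fin N)) (b : Fin N → Bool) : Finset (Fin N → Bool) :=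
  Finset.univ.filter fun y => ∀ n ∈ K, y n = b n

lemma mem_cube {N : ℕ} {K : Finset (Fin N)} {b y : Fin N → Bool} :
    y ∈ cube K b ↔ ∀ n ∈ K, y n = b n := by simp [cube]

lemma cube_empty {N : ℕ} (b : Fin N → Bool) : cube (∅ : Finset (Fin N)) b = Finset.univ := by
  simp [cube]

lemma cube_inter {N : ℕ} (K J : Finset (Fin N)) (b c : Fin N → Bool)
    (hcons : ∀ n ∈ K, n ∈ J → b n = c n) :
    (cube K b).filter (fun y => ∀ n ∈ J, y n = c n)
      = cube (K ∪ J) (fun n => if n ∈ K then b n else c n) := by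
  ext y
  simp only [mem_filter, mem_cube, Finset.mem_union]
  constructor
  · rintro ⟨h1, h2⟩ n hn
    by_cases hK : n ∈ K
    · simp [hK, h1 n hK]
    · rcases hn with hn | hn
      · exact absurd hn hK
      · simp [hK, h2 n hn]
  · intro h
    constructor
    · intro n hn
      have := h n (Or.inl hn); simpa [hn] using this
    · intro n hn
      have := h n (Or.inr hn)
      by_cases hK : n ∈ K
      · simpa [hK, hcons n hK hn] using this
      · simpa [hK] using this

lemma core {N d ℓ : ℕ} (hℓ : 0 < ℓ) {ε δ : ℝ} (hε : 0 < ε) (hδ : 0 < δ) (hεδ : ε < 1 + δ)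
    (p X : (Fin N → Bool) → ℝ) (hp : ∀ y, 0 ≤ p y) (hpsum : ∑ y, p y = 1)
    {m : ℕ} {α : Fin m → ℝ} {J : Fin m → Finset (Fin N)} {c : Fin m → (Fin N → Bool)}
    (hα : ∀ j, 0 ≤ α j) (hJ : ∀ j, (J j).card ≤ d)
    (hX : ∀ y, X y = ∑ j, α j * (if ∀ n ∈ J j, y n = c j n then (1:ℝ) else 0))
    (bad : (Fin N → Bool) → Prop) [DecidablePred bad]
    (hbad1 : ∀ y, bad y → X y ≥ (1 + δ) * ∑ z, p z * X z)
    (hbad2 : ∀ y, bad y → ∀ (K : Finset (Fin N)) (b : Fin N → Bool), K.card ≤ d * ℓ →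
      (∑ z ∈ cube K b, p z * X z) / (∑ z ∈ cube K b, p z) ≥ (1 + δ - ε) * ∑ z, p z * X z →
      y ∉ cube K b) :
    ∑ y ∈ Finset.univ.filter bad, p y ≤ ((1 + δ - ε) / (1 + δ)) ^ ℓ := by
  obtain ⟨M, hMdef⟩ : ∃ M : ℝ, ∑ z, p z * X z = M := ⟨_, rfl⟩
  rw [hMdef] at hbad1 hbad2
  have hρ : (0:ℝ) < 1 + δ - ε := by linarith
  have h1δ : (0:ℝ) < 1 + δ := by linarith
  have hX0 : ∀ y, 0 ≤ X y := by
    intro y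
    rw [hX y]
    refine Finset.sum_nonneg fun j _ => mul_nonneg (hα j) ?_
    split <;> norm_num
  have hM0 : 0 ≤ M := hMdef ▸ Finset.sum_nonneg fun z _ => mul_nonneg (hp z) (hX0 z)
  have nonheavy : ∀ (K : Finset (Fin N)) (b : Fin N → Bool), K.card ≤ d * ℓ →
      ((cube K b).filter bad).Nonempty →
      ∑ z ∈ cube K b, p z * X z ≤ (1 + δ - ε) * M * ∑ z ∈ cube K b, p z := by
    intro K b hK ⟨y0, hy0⟩
    rw [mem_filter] at hy0
    have hnh : ¬ ((∑ z ∈ cube K b, p z * X z) / (∑ z ∈ cube K b, p z) ≥ (1 + δ - ε) * M) := by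
      intro h
      exact hbad2 y0 hy0.2 K b hK h hy0.1
    push_neg at hnh
    have hS0 : 0 ≤ ∑ z ∈ cube K b, p z := Finset.sum_nonneg fun z _ => hp z
    rcases hS0.lt_or_eq with hS | hS
    · exact le_of_lt ((div_lt_iff₀ hS).mp hnh)
    · have hz : ∀ z ∈ cube K b, p z = 0 :=
        (Finset.sum_eq_zero_iff_of_nonneg (fun z _ => hp z)).mp hS.symm
      have h0 : ∑ z ∈ cube K b, p z * X z = 0 :=
        Finset.sum_eq_zero fun z hzc => by rw [hz z hzc, zero_mul]
      rw [h0, ← hS, mul_zero]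
  have claim : ∀ k, k ≤ ℓ → ∀ (K : Finset (Fin N)) (b : Fin N → Bool), K.card ≤ d * (ℓ - k) →
      ∑ y ∈ (cube K b).filter bad, p y * X y ^ k
        ≤ ((1 + δ - ε) * M) ^ k * ∑ y ∈ cube K b, p y := by
    intro k
    induction k with
    | zero =>
      intro _ K b _
      simp only [pow_zero, mul_one, one_mul]
      exact Finset.sum_le_sum_of_subset_of_nonneg (Finset.filter_subset _ _)
        (fun y hy _ => hp y)
    | succ k ih =>
      intro hk K b hKcard
      have hkℓ : k ≤ ℓ := Nat.le_of_succ_le hk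
      have hRHS0 : (0:ℝ) ≤ ((1 + δ - ε) * M) ^ k :=
        pow_nonneg (mul_nonneg hρ.le hM0) k
      by_cases hne : ((cube K b).filter bad).Nonempty
      · have step1 : ∑ y ∈ (cube K b).filter bad, p y * X y ^ (k+1)
            = ∑ j, α j * ∑ y ∈ ((cube K b).filter bad).filter
                (fun y => ∀ n ∈ J j, y n = c j n), p y * X y ^ k := by
          have e1 : ∀ y, p y * X y ^ (k+1)
              = ∑ j, α j * (if (∀ n ∈ J j, y n = c j n) then p y * X y ^ k else 0) := by
            intro y
            calc p y * X y ^ (k+1) = (p y * X y ^ k) * X y := by ring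
              _ = ∑ j, α j * (if (∀ n ∈ J j, y n = c j n) then p y * X y ^ k else 0) := by
                  rw [hX y, Finset.mul_sum]
                  exact Finset.sum_congr rfl fun j _ => by split_ifs <;> ring
          rw [Finset.sum_congr rfl fun y _ => e1 y, Finset.sum_comm]
          refine Finset.sum_congr rfl fun j _ => ?_
          rw [Finset.mul_sum]
          conv_rhs => rw [Finset.sum_filter]
          exact Finset.sum_congr rfl fun y _ => by split_ifs <;> ring
        rw [step1]
        have perj : ∀ j : Fin m, α j * ∑ y ∈ ((cube K b).filter bad).filter
              (fun y => ∀ n ∈ J j, y n = c j n), p y * X y ^ k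
            ≤ α j * (((1 + δ - ε) * M) ^ k *
                ∑ y ∈ (cube K b).filter (fun y => ∀ n ∈ J j, y n = c j n), p y) := by
          intro j
          refine mul_le_mul_of_nonneg_left ?_ (hα j)
          by_cases hcons : ∀ n ∈ K, n ∈ J j → b n = c j n
          · have hQ := cube_inter K (J j) b (c j) hcons
            have hS' : ((cube K b).filter bad).filter (fun y => ∀ n ∈ J j, y n = c j n)
                = (cube (K ∪ J j) (fun n => if n ∈ K then b n else c j n)).filter bad := by
              rw [Finset.filter_comm, hQ]
            rw [hS', hQ]
            refine ih hkℓ _ _ ?_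
            calc (K ∪ J j).card ≤ K.card + (J j).card := Finset.card_union_le _ _
              _ ≤ d * (ℓ - (k+1)) + d := Nat.add_le_add hKcard (hJ j)
              _ = d * (ℓ - (k+1) + 1) := by ring
              _ = d * (ℓ - k) := by
                  congr 1
                  omega
          · push_neg at hcons
            obtain ⟨n, hnK, hnJ, hne'⟩ := hcons
            have hempt : (cube K b).filter (fun y => ∀ n ∈ J j, y n = c j n) = ∅ := by
              rw [Finset.eq_empty_iff_forall_notMem]
              intro y hy
              rw [Finset.mem_filter, mem_cube] at hy
              exact hne' ((hy.1 n hnK).symm.trans (hy.2 n hnJ))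
            have hempt2 : ((cube K b).filter bad).filter (fun y => ∀ n ∈ J j, y n = c j n)
                = ∅ := by
              rw [Finset.filter_comm, hempt, Finset.filter_empty]
            rw [hempt, hempt2]
            simp
        calc ∑ j, α j * ∑ y ∈ ((cube K b).filter bad).filter
              (fun y => ∀ n ∈ J j, y n = c j n), p y * X y ^ k
            ≤ ∑ j, α j * (((1 + δ - ε) * M) ^ k *
                ∑ y ∈ (cube K b).filter (fun y => ∀ n ∈ J j, y n = c j n), p y) :=
              Finset.sum_le_sum fun j _ => perj j
          _ = ((1 + δ - ε) * M) ^ k * ∑ j, α j *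
                ∑ y ∈ (cube K b).filter (fun y => ∀ n ∈ J j, y n = c j n), p y := by
              rw [Finset.mul_sum]
              exact Finset.sum_congr rfl fun j _ => by ring
          _ = ((1 + δ - ε) * M) ^ k * ∑ y ∈ cube K b, p y * X y := by
              congr 1
              have : ∀ j : Fin m, α j * ∑ y ∈ (cube K b).filter
                    (fun y => ∀ n ∈ J j, y n = c j n), p y
                  = ∑ y ∈ cube K b, α j * (if (∀ n ∈ J j, y n = c j n) then p y else 0) := by
                intro j
                rw [Finset.sum_filter, Finset.mul_sum]
              rw [Finset.sum_congr rfl fun j _ => this j, Finset.sum_comm]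
              refine Finset.sum_congr rfl fun y _ => ?_
              rw [hX y, Finset.mul_sum]
              exact Finset.sum_congr rfl fun j _ => by split_ifs <;> ring
          _ ≤ ((1 + δ - ε) * M) ^ k * ((1 + δ - ε) * M * ∑ y ∈ cube K b, p y) := by
              refine mul_le_mul_of_nonneg_left ?_ hRHS0
              refine nonheavy K b ?_ hne
              calc K.card ≤ d * (ℓ - (k+1)) := hKcard
                _ ≤ d * ℓ := Nat.mul_le_mul_left d (Nat.sub_le _ _)
          _ = ((1 + δ - ε) * M) ^ (k+1) * ∑ y ∈ cube K b, p y := by ring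
      · rw [Finset.not_nonempty_iff_eq_empty] at hne
        rw [hne, Finset.sum_empty]
        exact mul_nonneg (pow_nonneg (mul_nonneg hρ.le hM0) _)
          (Finset.sum_nonneg fun y _ => hp y)
  have final := claim ℓ le_rfl ∅ (fun _ => false) (by simp)
  rw [cube_empty, hpsum, mul_one] at final
  rcases hM0.lt_or_eq with hM | hM
  · have hlow : ((1 + δ) * M) ^ ℓ * ∑ y ∈ Finset.univ.filter bad, p y
        ≤ ((1 + δ - ε) * M) ^ ℓ := by
      calc ((1 + δ) * M) ^ ℓ * ∑ y ∈ Finset.univ.filter bad, p y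
          = ∑ y ∈ Finset.univ.filter bad, ((1 + δ) * M) ^ ℓ * p y := by rw [Finset.mul_sum]
        _ ≤ ∑ y ∈ Finset.univ.filter bad, p y * X y ^ ℓ := by
            refine Finset.sum_le_sum fun y hy => ?_
            have hXy := hbad1 y (Finset.mem_filter.mp hy).2
            have hpw : ((1 + δ) * M) ^ ℓ ≤ X y ^ ℓ :=
              pow_le_pow_left₀ (mul_nonneg h1δ.le hM0) hXy ℓ
            calc ((1 + δ) * M) ^ ℓ * p y ≤ X y ^ ℓ * p y :=
                mul_le_mul_of_nonneg_right hpw (hp y)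
              _ = p y * X y ^ ℓ := by ring
        _ ≤ ((1 + δ - ε) * M) ^ ℓ := final
    have hpos : (0:ℝ) < ((1 + δ) * M) ^ ℓ := pow_pos (mul_pos h1δ hM) ℓ
    have h2 : ∑ y ∈ Finset.univ.filter bad, p y
        ≤ ((1 + δ - ε) * M) ^ ℓ / ((1 + δ) * M) ^ ℓ := by
      rw [le_div_iff₀ hpos]
      linarith [hlow]
    calc ∑ y ∈ Finset.univ.filter bad, p y
        ≤ ((1 + δ - ε) * M) ^ ℓ / ((1 + δ) * M) ^ ℓ := h2
      _ = ((1 + δ - ε) / (1 + δ)) ^ ℓ := by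
          rw [← div_pow]
          congr 1
          field_simp
  · have hbadempty : Finset.univ.filter bad = ∅ := by
      rw [Finset.eq_empty_iff_forall_notMem]
      intro y hy
      have hb := (Finset.mem_filter.mp hy).2
      refine hbad2 y hb ∅ (fun _ => false) (Nat.zero_le _) ?_ ?_
      · rw [cube_empty, hpsum, hMdef, ← hM]
        simp
      · rw [cube_empty]
        exact Finset.mem_univ y
    rw [hbadempty, Finset.sum_empty]
    exact pow_nonneg (div_nonneg hρ.le h1δ.le) ℓ

lemma integral_comp_eq_sum {Ω : Type*} [MeasurableSpace Ω] (μ : Measure Ω) [IsProbabilityMeasure μ]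
    {N : ℕ} (Y : Ω → (Fin N → Bool)) (hY : Measurable Y) (f : (Fin N → Bool) → ℝ) :
    ∫ ω, f (Y ω) ∂μ = ∑ y, (μ (Y ⁻¹' {y})).toReal * f y := by
  have hf : Measurable f := .of_discrete
  rw [← integral_map hY.aemeasurable hf.aestronglyMeasurable, integral_fintype .of_finite]
  simp only [smul_eq_mul]
  congr 1
  ext y
  rw [measureReal_def, Measure.map_apply hY (MeasurableSet.singleton y)]

lemma meas_preimage_eq_sum {Ω : Type*} [MeasurableSpace Ω] (μ : Measure Ω)
    [IsProbabilityMeasure μ] {N : ℕ} (Y : Ω → (Fin N → Bool)) (hY : Measurable Y)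
    (S : Set (Fin N → Bool)) [DecidablePred (· ∈ S)] :
    (μ (Y ⁻¹' S)).toReal = ∑ y ∈ Finset.univ.filter (· ∈ S), (μ (Y ⁻¹' {y})).toReal := by
  have hm : MeasurableSet (Y ⁻¹' S) := hY .of_discrete
  rw [← measureReal_def, ← integral_indicator_one hm]
  have he : (fun ω => (Y ⁻¹' S).indicator (1 : Ω → ℝ) ω)
      = fun ω => S.indicator (1 : (Fin N → Bool) → ℝ) (Y ω) := by
    funext ω
    by_cases h : Y ω ∈ S <;> simp [Set.indicator, h]
  rw [show (∫ a, (Y ⁻¹' S).indicator 1 a ∂μ) = ∫ a, S.indicator 1 (Y a) ∂μ from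
    congrArg (fun g => ∫ a, g a ∂μ) he]
  rw [integral_comp_eq_sum μ Y hY, Finset.sum_filter]
  refine Finset.sum_congr rfl fun y _ => ?_
  by_cases h : y ∈ S <;> simp [Set.indicator, h]

lemma setintegral_comp_eq_sum {Ω : Type*} [MeasurableSpace Ω] (μ : Measure Ω)
    [IsProbabilityMeasure μ] {N : ℕ} (Y : Ω → (Fin N → Bool)) (hY : Measurable Y)
    (f : (Fin N → Bool) → ℝ) (S : Set (Fin N → Bool)) [DecidablePred (· ∈ S)] :
    ∫ ω in Y ⁻¹' S, f (Y ω) ∂μ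
      = ∑ y ∈ Finset.univ.filter (· ∈ S), (μ (Y ⁻¹' {y})).toReal * f y := by
  have hm : MeasurableSet (Y ⁻¹' S) := hY .of_discrete
  rw [← integral_indicator hm]
  have he : (fun ω => (Y ⁻¹' S).indicator (fun ω' => f (Y ω')) ω)
      = fun ω => S.indicator f (Y ω) := by
    funext ω
    by_cases h : Y ω ∈ S <;> simp [Set.indicator, h]
  rw [show (∫ a, (Y ⁻¹' S).indicator (fun ω' => f (Y ω')) a ∂μ)
      = ∫ a, S.indicator f (Y a) ∂μ from congrArg (fun g => ∫ a, g a ∂μ) he]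
  rw [integral_comp_eq_sum μ Y hY, Finset.sum_filter]
  refine Finset.sum_congr rfl fun y _ => ?_
  by_cases h : y ∈ S <;> simp [Set.indicator, h]

/-- Lemma 2.4. If X ≥ 0 has complexity at most d, then the probability
that X ≥ (1+δ)E[X] while Y avoids every subcube F of codimension ≤ dℓ with
E[X | Y ∈ F] ≥ (1+δ-ε)E[X] is at most ((1+δ-ε)/(1+δ))^ℓ. -/
theorem stmt_2 {Ω : Type*} [MeasurableSpace Ω] (μ : Measure Ω) [IsProbabilityMeasure μ]
    {N : ℕ} (Y : Ω → (Fin N → Bool)) (hY : Measurable Y)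
    (X : (Fin N → Bool) → ℝ) (d ℓ : ℕ) (hℓ : 0 < ℓ)
    (hcomp : ∃ (m : ℕ) (α : Fin m → ℝ) (J : Fin m → Finset (Fin N))
        (c : Fin m → (Fin N → Bool)),
      (∀ j, 0 ≤ α j) ∧ (∀ j, (J j).card ≤ d) ∧
      ∀ y, X y = ∑ j, α j * (if ∀ n ∈ J j, y n = c j n then (1 : ℝ) else 0))
    (ε δ : ℝ) (hε : 0 < ε) (hδ : 0 < δ) (hεδ : ε < 1 + δ) :
    (μ {ω | X (Y ω) ≥ (1 + δ) * ∫ ω', X (Y ω') ∂μ ∧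
        ∀ F : Set (Fin N → Bool),
          (∃ (J : Finset (Fin N)) (c : Fin N → Bool),
            F = {y | ∀ n ∈ J, y n = c n} ∧ J.card ≤ d * ℓ ∧
            (∫ ω' in Y ⁻¹' F, X (Y ω') ∂μ) / (μ (Y ⁻¹' F)).toReal
              ≥ (1 + δ - ε) * ∫ ω', X (Y ω') ∂μ) → Y ω ∉ F}).toReal
      ≤ ((1 + δ - ε) / (1 + δ)) ^ ℓ := by
  classical
  obtain ⟨m, α, J, c, hα, hJ, hXdec⟩ := hcomp
  have hp : ∀ y : Fin N → Bool, 0 ≤ (μ (Y ⁻¹' {y})).toReal := fun y => ENNReal.toReal_nonneg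
  have hpsum : ∑ y : Fin N → Bool, (μ (Y ⁻¹' {y})).toReal = 1 := by
    have h := integral_comp_eq_sum μ Y hY (fun _ => (1 : ℝ))
    simpa using h.symm
  have hmean : ∫ ω', X (Y ω') ∂μ = ∑ z, (μ (Y ⁻¹' {z})).toReal * X z :=
    integral_comp_eq_sum μ Y hY X
  have hcubeset : ∀ (K : Finset (Fin N)) (b : Fin N → Bool),
      Finset.univ.filter (· ∈ {y : Fin N → Bool | ∀ n ∈ K, y n = b n}) = cube K b := by
    intro K b
    apply Finset.filter_congr
    intro y _
    simp [Set.mem_setOf_eq]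
  set Ebad : Set (Fin N → Bool) := {y | X y ≥ (1 + δ) * ∫ ω', X (Y ω') ∂μ ∧
      ∀ F : Set (Fin N → Bool),
        (∃ (J : Finset (Fin N)) (c : Fin N → Bool),
          F = {y | ∀ n ∈ J, y n = c n} ∧ J.card ≤ d * ℓ ∧
          (∫ ω' in Y ⁻¹' F, X (Y ω') ∂μ) / (μ (Y ⁻¹' F)).toReal
            ≥ (1 + δ - ε) * ∫ ω', X (Y ω') ∂μ) → y ∉ F} with hEdef
  have hevent : {ω | X (Y ω) ≥ (1 + δ) * ∫ ω', X (Y ω') ∂μ ∧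
        ∀ F : Set (Fin N → Bool),
          (∃ (J : Finset (Fin N)) (c : Fin N → Bool),
            F = {y | ∀ n ∈ J, y n = c n} ∧ J.card ≤ d * ℓ ∧
            (∫ ω' in Y ⁻¹' F, X (Y ω') ∂μ) / (μ (Y ⁻¹' F)).toReal
              ≥ (1 + δ - ε) * ∫ ω', X (Y ω') ∂μ) → Y ω ∉ F} = Y ⁻¹' Ebad := rfl
  rw [hevent, meas_preimage_eq_sum μ Y hY Ebad]
  refine core hℓ hε hδ hεδ (fun y => (μ (Y ⁻¹' {y})).toReal) X hp hpsum hα hJ hXdec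
    (· ∈ Ebad) ?_ ?_
  · intro y hy
    rw [← hmean]
    exact hy.1
  · intro y hy K b hK hheavy
    intro hmemcube
    have hmemF : y ∈ {z : Fin N → Bool | ∀ n ∈ K, z n = b n} := by
      rw [Set.mem_setOf_eq]
      exact mem_cube.mp hmemcube
    refine hy.2 {z : Fin N → Bool | ∀ n ∈ K, z n = b n} ⟨K, b, rfl, hK, ?_⟩ hmemF
    rw [setintegral_comp_eq_sum μ Y hY X _, meas_preimage_eq_sum μ Y hY _, hcubeset K b, hmean]
    exact hheavy
end

section
/- Let G be a graph with n vertices, m > 3 edges, and minimum degree at least 2. Then the number of induced copies of the 4-cycle C_4 in G is at most m(m − n + 1)/4. -/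
open Finset

private lemma stmt3_key {V : Type*} [Fintype V] [DecidableEq V] (G : SimpleGraph V)
    [DecidableRel G.Adj] (hmin : ∀ v : V, 2 ≤ G.degree v) {a b : V} (hab : G.Adj a b) :
    (univ.filter (fun cd : V × V => G.Adj b cd.1 ∧ G.Adj cd.1 cd.2 ∧ G.Adj cd.2 a ∧
      a ≠ cd.1 ∧ b ≠ cd.2 ∧ ¬ G.Adj a cd.1 ∧ ¬ G.Adj b cd.2)).card + Fintype.card V
      ≤ G.edgeFinset.card + 1 := by
  classical
  set A : Finset V := univ.filter (fun v => G.Adj a v ∧ ¬ G.Adj b v ∧ v ≠ b) with hA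
  set B : Finset V := univ.filter (fun v => G.Adj b v ∧ ¬ G.Adj a v ∧ v ≠ a) with hB
  set R : Finset V := univ \ (insert a (insert b (A ∪ B))) with hR
  have hmemA : ∀ v, v ∈ A ↔ G.Adj a v ∧ ¬ G.Adj b v ∧ v ≠ b := by
    intro v; simp [hA]
  have hmemB : ∀ v, v ∈ B ↔ G.Adj b v ∧ ¬ G.Adj a v ∧ v ≠ a := by
    intro v; simp [hB]
  have haA : a ∉ A := fun h => G.irrefl ((hmemA a).1 h).1
  have haB : a ∉ B := fun h => ((hmemB a).1 h).2.2 rfl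
  have hbA : b ∉ A := fun h => ((hmemA b).1 h).2.2 rfl
  have hbB : b ∉ B := fun h => G.irrefl ((hmemB b).1 h).1
  have hABdisj : Disjoint A B := by
    rw [Finset.disjoint_left]
    intro v hvA hvB
    exact ((hmemA v).1 hvA).2.1 ((hmemB v).1 hvB).1
  have hmemR : ∀ v, v ∈ R ↔ v ≠ a ∧ v ≠ b ∧ v ∉ A ∧ v ∉ B := by
    intro v
    simp only [hR, mem_sdiff, mem_univ, mem_insert, mem_union, not_or, true_and]
  set P1 : Sym2 V → Prop := fun e => ∃ x ∈ B, ∃ y ∈ A, e = s(x, y) with hP1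
  set F1 : Finset (Sym2 V) := G.edgeFinset.filter P1 with hF1
  set F2 : Finset (Sym2 V) := G.edgeFinset.filter (fun e => ¬ P1 e) with hF2
  -- step 1: fiber injects into F1
  have h1 : (univ.filter (fun cd : V × V => G.Adj b cd.1 ∧ G.Adj cd.1 cd.2 ∧ G.Adj cd.2 a ∧
      a ≠ cd.1 ∧ b ≠ cd.2 ∧ ¬ G.Adj a cd.1 ∧ ¬ G.Adj b cd.2)).card ≤ F1.card := by
    apply Finset.card_le_card_of_injOn (fun cd => s(cd.1, cd.2))
    · intro cd hcd
      simp only [mem_coe, mem_filter, mem_univ, true_and] at hcd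
      obtain ⟨h1, h2, h3, h4, h5, h6, h7⟩ := hcd
      rw [hF1, mem_coe, mem_filter]
      refine ⟨SimpleGraph.mem_edgeFinset.mpr (G.mem_edgeSet.mpr h2), cd.1, ?_, cd.2, ?_, rfl⟩
      · exact (hmemB cd.1).2 ⟨h1, h6, fun h => h4 h.symm⟩
      · exact (hmemA cd.2).2 ⟨h3.symm, h7, fun h => h5 h.symm⟩
    · intro cd hcd cd' hcd' heq
      simp only [coe_filter, Set.mem_setOf_eq, mem_univ, true_and] at hcd hcd'
      rw [Sym2.eq_iff] at heq
      rcases heq with ⟨e1, e2⟩ | ⟨e1, e2⟩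
      · exact Prod.ext_iff.2 ⟨e1, e2⟩
      · exfalso
        exact hcd.2.2.2.2.2.1 (e1 ▸ hcd'.2.2.1.symm)
  -- step 2: many edges outside F1
  have hRIncR : R.card ≤ (G.edgeFinset.filter (fun e => ∃ v ∈ R, v ∈ e)).card := by
    set IncR := G.edgeFinset.filter (fun e => ∃ v ∈ R, v ∈ e) with hIncR
    set D : Finset (V × V) := R.biUnion (fun v => (G.neighborFinset v).image (fun w => (v, w)))
      with hD
    have hDmem : ∀ p : V × V, p ∈ D ↔ p.1 ∈ R ∧ G.Adj p.1 p.2 := by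
      intro p
      simp only [hD, mem_biUnion, mem_image, SimpleGraph.mem_neighborFinset]
      constructor
      · rintro ⟨v, hv, w, hw, rfl⟩; exact ⟨hv, hw⟩
      · rintro ⟨hv, hw⟩; exact ⟨p.1, hv, p.2, hw, rfl⟩
    have hDcard : D.card = ∑ v ∈ R, G.degree v := by
      rw [hD, Finset.card_biUnion]
      · refine Finset.sum_congr rfl fun v _ => ?_
        rw [Finset.card_image_of_injective _ (fun w w' h => (Prod.ext_iff.1 h).2)]
        rfl
      · intro v hv w hw hvw
        rw [Function.onFun, Finset.disjoint_left]
        rintro p hp hq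
        simp only [mem_image] at hp hq
        obtain ⟨x, _, rfl⟩ := hp
        obtain ⟨y, _, he⟩ := hq
        exact hvw (Prod.ext_iff.1 he).1.symm
    have h2R : 2 * R.card ≤ D.card := by
      rw [hDcard]
      calc 2 * R.card = ∑ _v ∈ R, 2 := by rw [sum_const, smul_eq_mul, mul_comm]
      _ ≤ ∑ v ∈ R, G.degree v := Finset.sum_le_sum fun v _ => hmin v
    have hD2 : D.card ≤ 2 * IncR.card := by
      apply Finset.card_le_mul_card_image_of_maps_to (f := fun p : V × V => s(p.1, p.2))
      · intro p hp
        rw [hDmem] at hp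
        rw [hIncR, mem_filter]
        exact ⟨SimpleGraph.mem_edgeFinset.mpr (G.mem_edgeSet.mpr hp.2), p.1, hp.1, Sym2.mem_mk_left _ _⟩
      · intro e _
        induction e using Sym2.ind with
        | _ x y =>
          calc (D.filter (fun p : V × V => s(p.1, p.2) = s(x, y))).card
              ≤ ({(x, y), (y, x)} : Finset (V × V)).card := by
                apply Finset.card_le_card
                intro p hp
                rw [mem_filter] at hp
                rw [Sym2.eq_iff] at hp
                simp only [mem_insert, mem_singleton]
                rcases hp.2 with ⟨e1, e2⟩ | ⟨e1, e2⟩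
                · exact Or.inl (Prod.ext_iff.2 ⟨e1, e2⟩)
                · exact Or.inr (Prod.ext_iff.2 ⟨e1, e2⟩)
            _ ≤ 2 := card_insert_le _ _ |>.trans (by simp)
    omega
  set IncR := G.edgeFinset.filter (fun e => ∃ v ∈ R, v ∈ e) with hIncR
  set S1 : Finset (Sym2 V) :=
    insert s(a, b) ((A.image fun v => s(a, v)) ∪ (B.image fun v => s(b, v))) with hS1
  have hS1card : S1.card = 1 + A.card + B.card := by
    have hinjA : Set.InjOn (fun v => s(a, v)) A := by
      intro v hv w hw h
      rw [Sym2.eq_iff] at h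
      rcases h with ⟨-, h⟩ | ⟨-, h2⟩
      · exact h
      · exact absurd (h2 ▸ ((hmemA v).1 hv).1) G.irrefl
    have hinjB : Set.InjOn (fun v => s(b, v)) B := by
      intro v hv w hw h
      rw [Sym2.eq_iff] at h
      rcases h with ⟨-, h⟩ | ⟨-, h2⟩
      · exact h
      · exact absurd (h2 ▸ ((hmemB v).1 hv).1) G.irrefl
    have hdAB : Disjoint (A.image fun v => s(a, v)) (B.image fun v => s(b, v)) := by
      rw [Finset.disjoint_left]
      rintro e he he'
      obtain ⟨v, hv, rfl⟩ := mem_image.1 he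
      obtain ⟨w, hw, h⟩ := mem_image.1 he'
      rw [Sym2.eq_iff] at h
      rcases h with ⟨h1, -⟩ | ⟨-, h2⟩
      · exact G.ne_of_adj hab h1.symm
      · exact ((hmemB w).1 hw).2.2 h2
    have hnm : s(a, b) ∉ (A.image fun v => s(a, v)) ∪ (B.image fun v => s(b, v)) := by
      intro hmem
      rcases mem_union.1 hmem with h | h
      · obtain ⟨v, hv, h⟩ := mem_image.1 h
        rw [Sym2.eq_iff] at h
        rcases h with ⟨-, h2⟩ | ⟨h1, -⟩
        · exact ((hmemA v).1 hv).2.2 h2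
        · exact G.ne_of_adj hab h1
      · obtain ⟨v, hv, h⟩ := mem_image.1 h
        rw [Sym2.eq_iff] at h
        rcases h with ⟨h1, -⟩ | ⟨-, h2⟩
        · exact G.ne_of_adj hab h1.symm
        · exact ((hmemB v).1 hv).2.2 h2
    rw [hS1, Finset.card_insert_of_notMem hnm, Finset.card_union_of_disjoint hdAB,
      Finset.card_image_of_injOn hinjA, Finset.card_image_of_injOn hinjB]
    omega
  have hS1sub : S1 ⊆ F2 := by
    intro e he
    rw [hS1, mem_insert, mem_union] at he
    rw [hF2, mem_filter]
    rcases he with rfl | he | he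
    · refine ⟨SimpleGraph.mem_edgeFinset.mpr (G.mem_edgeSet.mpr hab), ?_⟩
      rintro ⟨x, hx, y, hy, h⟩
      rw [Sym2.eq_iff] at h
      rcases h with ⟨h1, h2⟩ | ⟨h1, h2⟩
      · exact ((hmemB x).1 hx).2.2 h1.symm
      · exact G.irrefl (h1 ▸ ((hmemA y).1 hy).1)
    · obtain ⟨v, hv, rfl⟩ := mem_image.1 he
      refine ⟨SimpleGraph.mem_edgeFinset.mpr (G.mem_edgeSet.mpr ((hmemA v).1 hv).1), ?_⟩
      rintro ⟨x, hx, y, hy, h⟩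
      rw [Sym2.eq_iff] at h
      rcases h with ⟨h1, h2⟩ | ⟨h1, h2⟩
      · exact ((hmemB x).1 hx).2.2 h1.symm
      · exact G.irrefl (h1 ▸ ((hmemA y).1 hy).1)
    · obtain ⟨v, hv, rfl⟩ := mem_image.1 he
      refine ⟨SimpleGraph.mem_edgeFinset.mpr (G.mem_edgeSet.mpr ((hmemB v).1 hv).1), ?_⟩
      rintro ⟨x, hx, y, hy, h⟩
      rw [Sym2.eq_iff] at h
      rcases h with ⟨h1, h2⟩ | ⟨h1, h2⟩
      · exact G.irrefl (h1 ▸ ((hmemB x).1 hx).1)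
      · exact ((hmemA y).1 hy).2.2 h1.symm
  have hIncRsub : IncR ⊆ F2 := by
    intro e he
    rw [hIncR, mem_filter] at he
    obtain ⟨he1, v, hv, hve⟩ := he
    rw [hF2, mem_filter]
    refine ⟨he1, ?_⟩
    rintro ⟨x, hx, y, hy, rfl⟩
    rw [Sym2.mem_iff] at hve
    rw [hmemR] at hv
    rcases hve with rfl | rfl
    · exact hv.2.2.2 hx
    · exact hv.2.2.1 hy
  have hdisj : Disjoint S1 IncR := by
    rw [Finset.disjoint_left]
    intro e he he'
    rw [hIncR, mem_filter] at he'
    obtain ⟨-, v, hv, hve⟩ := he'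
    rw [hmemR] at hv
    rw [hS1, mem_insert, mem_union] at he
    rcases he with rfl | he | he
    · rw [Sym2.mem_iff] at hve
      rcases hve with rfl | rfl
      · exact hv.1 rfl
      · exact hv.2.1 rfl
    · obtain ⟨w, hw, rfl⟩ := mem_image.1 he
      rw [Sym2.mem_iff] at hve
      rcases hve with rfl | rfl
      · exact hv.1 rfl
      · exact hv.2.2.1 hw
    · obtain ⟨w, hw, rfl⟩ := mem_image.1 he
      rw [Sym2.mem_iff] at hve
      rcases hve with rfl | rfl
      · exact hv.2.1 rfl
      · exact hv.2.2.2 hw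
  have h2 : 1 + A.card + B.card + R.card ≤ F2.card := by
    calc 1 + A.card + B.card + R.card ≤ S1.card + IncR.card := by
          rw [hS1card]; omega
      _ = (S1 ∪ IncR).card := (Finset.card_union_of_disjoint hdisj).symm
      _ ≤ F2.card := Finset.card_le_card (Finset.union_subset hS1sub hIncRsub)
  -- partition of vertices
  have hcardins : (insert a (insert b (A ∪ B))).card = 2 + A.card + B.card := by
    rw [Finset.card_insert_of_notMem, Finset.card_insert_of_notMem,
      Finset.card_union_of_disjoint hABdisj]
    · omega
    · simp [hbA, hbB]
    · simp only [mem_insert, mem_union, not_or]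
      exact ⟨G.ne_of_adj hab, haA, haB⟩
  have hRcard : R.card = Fintype.card V - (2 + A.card + B.card) := by
    rw [hR, Finset.card_sdiff_of_subset (Finset.subset_univ _), hcardins, Finset.card_univ]
  have hle : 2 + A.card + B.card ≤ Fintype.card V := by
    rw [← hcardins, ← Finset.card_univ]
    exact Finset.card_le_card (Finset.subset_univ _)
  have hsplit : F1.card + F2.card = G.edgeFinset.card :=
    Finset.card_filter_add_card_filter_not _
  omega

open Finset in

/-- Lemma 6.3. If G has n vertices, m > 3 edges and minimum degree at
least 2, then the number of induced copies of C₄ in G is at most m(m-n+1)/4.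
We count ordered 4-tuples (a,b,c,d) inducing a 4-cycle a-b-c-d-a; each (unordered)
induced copy of C₄ corresponds to exactly 8 such tuples, so the bound reads
(ordered count) ≤ 8·m(m-n+1)/4 = 2·m·(m-n+1). -/
theorem stmt_3 {V : Type*} [Fintype V] (G : SimpleGraph V) (n m : ℕ)
    (hn : n = Fintype.card V) (hm : m = G.edgeSet.ncard)
    (hm3 : 3 < m) (hmin : ∀ v : V, 2 ≤ (G.neighborSet v).ncard) :
    (Nat.card {q : V × V × V × V //
        G.Adj q.1 q.2.1 ∧ G.Adj q.2.1 q.2.2.1 ∧ G.Adj q.2.2.1 q.2.2.2 ∧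
        G.Adj q.2.2.2 q.1 ∧ q.1 ≠ q.2.2.1 ∧ q.2.1 ≠ q.2.2.2 ∧
        ¬ G.Adj q.1 q.2.2.1 ∧ ¬ G.Adj q.2.1 q.2.2.2} : ℝ)
      ≤ 2 * m * ((m : ℝ) - n + 1) := by
  classical
  have hm' : m = G.edgeFinset.card := by
    rw [hm, ← SimpleGraph.coe_edgeFinset, Set.ncard_coe_finset]
  have hdeg : ∀ v : V, 2 ≤ G.degree v := by
    intro v
    have := hmin v
    rwa [Set.ncard_eq_toFinset_card'] at this
  set P : V × V × V × V → Prop := fun q =>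
      G.Adj q.1 q.2.1 ∧ G.Adj q.2.1 q.2.2.1 ∧ G.Adj q.2.2.1 q.2.2.2 ∧
        G.Adj q.2.2.2 q.1 ∧ q.1 ≠ q.2.2.1 ∧ q.2.1 ≠ q.2.2.2 ∧
        ¬ G.Adj q.1 q.2.2.1 ∧ ¬ G.Adj q.2.1 q.2.2.2 with hP
  have hNat : Nat.card {q : V × V × V × V // P q} = (univ.filter P).card := by
    rw [Nat.card_eq_fintype_card, Fintype.card_subtype]
  set DE : Finset (V × V) := univ.filter fun (x, y) => G.Adj x y with hDE
  have hDEmem : ∀ p : V × V, p ∈ DE ↔ G.Adj p.1 p.2 := by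
    intro p; rw [hDE]; cases p; simp
  have hfib : (univ.filter P).card =
      ∑ p ∈ DE, ((univ.filter P).filter (fun q => (q.1, q.2.1) = p)).card := by
    apply Finset.card_eq_sum_card_fiberwise
    intro q hq
    rw [mem_coe, hDEmem]
    exact ((mem_filter.1 hq).2).1
  have hfibcard : ∀ p ∈ DE,
      ((univ.filter P).filter (fun q => (q.1, q.2.1) = p)).card =
      (univ.filter (fun cd : V × V => G.Adj p.2 cd.1 ∧ G.Adj cd.1 cd.2 ∧ G.Adj cd.2 p.1 ∧
        p.1 ≠ cd.1 ∧ p.2 ≠ cd.2 ∧ ¬ G.Adj p.1 cd.1 ∧ ¬ G.Adj p.2 cd.2)).card := by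
    intro p hp
    have hpadj : G.Adj p.1 p.2 := (hDEmem p).1 hp
    apply Finset.card_bij' (fun q _ => (q.2.2.1, q.2.2.2)) (fun cd _ => (p.1, p.2, cd.1, cd.2))
    case hi =>
      intro q hq
      simp only [mem_filter, mem_univ, true_and, hP] at hq ⊢
      obtain ⟨⟨h1, h2, h3, h4, h5, h6, h7, h8⟩, he⟩ := hq
      have he1 : q.1 = p.1 := congrArg Prod.fst he
      have he2 : q.2.1 = p.2 := congrArg Prod.snd he
      rw [← he1, ← he2]
      exact ⟨h2, h3, h4, h5, h6, h7, h8⟩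
    case hj =>
      intro cd hcd
      simp only [mem_filter, mem_univ, true_and] at hcd
      obtain ⟨h1, h2, h3, h4, h5, h6, h7⟩ := hcd
      simp only [mem_filter, mem_univ, true_and, hP]
      exact ⟨⟨hpadj, h1, h2, h3, h4, h5, h6, h7⟩, trivial⟩
    case left_inv =>
      intro q hq
      simp only [mem_filter] at hq
      rw [← hq.2]
    case right_inv =>
      intro cd hcd
      rfl
  have hkey : ∀ p ∈ DE,
      (univ.filter (fun cd : V × V => G.Adj p.2 cd.1 ∧ G.Adj cd.1 cd.2 ∧ G.Adj cd.2 p.1 ∧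
        p.1 ≠ cd.1 ∧ p.2 ≠ cd.2 ∧ ¬ G.Adj p.1 cd.1 ∧ ¬ G.Adj p.2 cd.2)).card + n ≤ m + 1 := by
    intro p hp
    rw [hn, hm']
    exact stmt3_key G hdeg ((hDEmem p).1 hp)
  have hDEcard : DE.card = 2 * m := by
    rw [hm', SimpleGraph.two_mul_card_edgeFinset, hDE]
  calc (Nat.card {q : V × V × V × V // P q} : ℝ)
      = ((univ.filter P).card : ℝ) := by rw [hNat]
    _ = ∑ p ∈ DE, (((univ.filter P).filter (fun q => (q.1, q.2.1) = p)).card : ℝ) := by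
        rw [hfib]; push_cast; rfl
    _ ≤ ∑ _p ∈ DE, ((m : ℝ) - n + 1) := by
        apply Finset.sum_le_sum
        intro p hp
        rw [hfibcard p hp]
        have := hkey p hp
        have hc : ((univ.filter (fun cd : V × V => G.Adj p.2 cd.1 ∧ G.Adj cd.1 cd.2 ∧
            G.Adj cd.2 p.1 ∧ p.1 ≠ cd.1 ∧ p.2 ≠ cd.2 ∧ ¬ G.Adj p.1 cd.1 ∧
            ¬ G.Adj p.2 cd.2)).card : ℝ) + n ≤ m + 1 := by exact_mod_cast this
        linarith
    _ = (DE.card : ℝ) * ((m : ℝ) - n + 1) := by rw [Finset.sum_const, nsmul_eq_mul]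
    _ = 2 * m * ((m : ℝ) - n + 1) := by rw [hDEcard]; push_cast; ring
end

section
/- For every edge uv of a graph G with n vertices, m edges, and minimum degree at least 2, the number of induced copies of C_4 in G containing the edge uv is at most m − n + 1. -/
open Finset

/-- for every edge uv of a graph G with n vertices, m edges and
minimum degree ≥ 2, the number of induced 4-cycles containing uv is at most
m - n + 1. An induced C₄ containing the edge uv is determined by the ordered
pair (x,y) of its other two vertices, with x the neighbour of v and y the
neighbour of u, so the count below equals N_ind(uv, C₄, G). -/
theorem stmt_4 {V : Type*} [Fintype V] (G : SimpleGraph V) (n m : ℕ)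
    (hn : n = Fintype.card V) (hm : m = G.edgeSet.ncard)
    (hmin : ∀ v : V, 2 ≤ (G.neighborSet v).ncard)
    (u v : V) (huv : G.Adj u v) :
    (Nat.card {q : V × V //
        G.Adj v q.1 ∧ G.Adj q.1 q.2 ∧ G.Adj q.2 u ∧
        q.1 ≠ u ∧ q.2 ≠ v ∧ ¬ G.Adj u q.1 ∧ ¬ G.Adj v q.2} : ℝ)
      ≤ (m : ℝ) - n + 1 := by
  classical
  set P : V × V → Prop := fun q => G.Adj v q.1 ∧ G.Adj q.1 q.2 ∧ G.Adj q.2 u ∧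
        q.1 ≠ u ∧ q.2 ≠ v ∧ ¬ G.Adj u q.1 ∧ ¬ G.Adj v q.2 with hP
  have hdeg : ∀ w : V, 2 ≤ G.degree w := by
    intro w
    have h := hmin w
    rwa [Set.ncard_eq_toFinset_card', ← SimpleGraph.neighborFinset_def,
      SimpleGraph.card_neighborFinset_eq_degree] at h
  have hcard : Nat.card {q : V × V // P q} = (Finset.univ.filter P).card := by
    simp [Nat.card_eq_fintype_card, Fintype.card_subtype]
  set S : Finset (V × V) := Finset.univ.filter P with hS
  have hmemS : ∀ q ∈ S, P q := fun q hq => (mem_filter.mp hq).2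
  set A : Finset V := G.neighborFinset u ∪ G.neighborFinset v with hA
  have huA : u ∈ A := by simp [hA, huv.symm]
  have hvA : v ∈ A := by simp [hA, huv]
  set E1 : Finset (Sym2 V) := S.image (fun q => s(q.1, q.2)) with hE1
  set E2 : Finset (Sym2 V) := G.incidenceFinset u ∪ G.incidenceFinset v with hE2
  set E3 : Finset (Sym2 V) := G.edgeFinset.filter (fun e => ∃ w ∈ e, w ∉ A) with hE3
  -- membership characterizations
  have hE1mem : ∀ e ∈ E1, ∃ x y, e = s(x, y) ∧ G.Adj x y ∧
      x ∈ A ∧ y ∈ A ∧ x ≠ u ∧ x ≠ v ∧ y ≠ u ∧ y ≠ v := by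
    intro e he
    rcases mem_image.mp he with ⟨⟨x, y⟩, hq, rfl⟩
    obtain ⟨h1, h2, h3, h4, h5, h6, h7⟩ := hmemS _ hq
    refine ⟨x, y, rfl, h2, by simp [hA, h1], by simp [hA, h3.symm], h4, ?_, ?_, h5⟩
    · exact fun h => G.irrefl (h ▸ h1)
    · exact fun h => G.irrefl (h ▸ h3)
  -- E1 card
  have hE1card : E1.card = S.card := by
    apply Finset.card_image_of_injOn
    intro q hq q' hq' hee
    obtain ⟨h1, _, _, _, _, _, h7⟩ := hmemS _ hq
    obtain ⟨h1', _, _, _, _, _, h7'⟩ := hmemS _ hq'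
    rcases Sym2.eq_iff.mp hee with ⟨ha, hb⟩ | ⟨ha, hb⟩
    · exact Prod.ext ha hb
    · exact absurd (ha ▸ h1) h7'
  -- E2 members are incident to u or v and have both endpoints in A
  have hE2mem : ∀ e ∈ E2, e ∈ G.edgeFinset ∧ (u ∈ e ∨ v ∈ e) ∧ ∀ w ∈ e, w ∈ A := by
    intro e he
    have he' : e ∈ G.incidenceSet u ∨ e ∈ G.incidenceSet v := by
      rcases mem_union.mp he with h | h <;>
        rw [SimpleGraph.mem_incidenceFinset] at h
      · exact Or.inl h
      · exact Or.inr h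
    have hedge : e ∈ G.edgeSet := by rcases he' with h | h <;> exact h.1
    refine ⟨SimpleGraph.mem_edgeFinset.mpr hedge, ?_, ?_⟩
    · rcases he' with h | h
      · exact Or.inl h.2
      · exact Or.inr h.2
    · intro w hw
      rw [hA, mem_union, SimpleGraph.mem_neighborFinset, SimpleGraph.mem_neighborFinset]
      induction e with
      | h a b =>
        have hab : G.Adj a b := hedge
        rcases he' with ⟨-, hu⟩ | ⟨-, hv⟩
        · rcases Sym2.mem_iff.mp hu with rfl | rfl <;>
            rcases Sym2.mem_iff.mp hw with rfl | rfl <;>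
            first
              | exact Or.inl hab
              | exact Or.inl hab.symm
              | exact Or.inr huv.symm
        · rcases Sym2.mem_iff.mp hv with rfl | rfl <;>
            rcases Sym2.mem_iff.mp hw with rfl | rfl <;>
            first
              | exact Or.inr hab
              | exact Or.inr hab.symm
              | exact Or.inl huv
  -- disjointness
  have h12 : Disjoint E1 E2 := by
    rw [Finset.disjoint_left]
    intro e he1 he2
    obtain ⟨x, y, rfl, _, _, _, hxu, hxv, hyu, hyv⟩ := hE1mem e he1
    rcases (hE2mem _ he2).2.1 with h | h <;> rcases Sym2.mem_iff.mp h with rfl | rfl <;>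
      first
        | exact hxu rfl
        | exact hxv rfl
        | exact hyu rfl
        | exact hyv rfl
  have h13 : Disjoint E1 E3 := by
    rw [Finset.disjoint_left]
    intro e he1 he3
    obtain ⟨x, y, rfl, _, hxA, hyA, _⟩ := hE1mem e he1
    obtain ⟨w, hw, hwA⟩ := (mem_filter.mp he3).2
    rcases Sym2.mem_iff.mp hw with rfl | rfl <;> exact hwA (by assumption)
  have h23 : Disjoint E2 E3 := by
    rw [Finset.disjoint_left]
    intro e he2 he3
    obtain ⟨w, hw, hwA⟩ := (mem_filter.mp he3).2
    exact hwA ((hE2mem e he2).2.2 w hw)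
  -- all in edgeFinset
  have hsub : E1 ∪ E2 ∪ E3 ⊆ G.edgeFinset := by
    intro e he
    rcases mem_union.mp he with he | he
    · rcases mem_union.mp he with he | he
      · obtain ⟨x, y, rfl, hxy, _⟩ := hE1mem e he
        exact SimpleGraph.mem_edgeFinset.mpr hxy
      · exact (hE2mem e he).1
    · exact (mem_filter.mp he).1
  -- m
  have hmcard : m = G.edgeFinset.card := by
    rw [hm, Set.ncard_eq_toFinset_card']
    exact congrArg Finset.card (by ext; simp)
  have hsum : E1.card + E2.card + E3.card ≤ m := by
    have h1 : (E1 ∪ E2 ∪ E3).card = (E1 ∪ E2).card + E3.card :=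
      Finset.card_union_of_disjoint (Finset.disjoint_union_left.mpr ⟨h13, h23⟩)
    have h2 : (E1 ∪ E2).card = E1.card + E2.card := Finset.card_union_of_disjoint h12
    have h3 : (E1 ∪ E2 ∪ E3).card ≤ G.edgeFinset.card := Finset.card_le_card hsub
    omega
  -- E2 lower bound
  have hE2card : G.degree u + G.degree v ≤ E2.card + 1 := by
    have hinter : G.incidenceFinset u ∩ G.incidenceFinset v ⊆ {s(u, v)} := by
      intro e he
      rw [mem_inter, SimpleGraph.mem_incidenceFinset, SimpleGraph.mem_incidenceFinset] at he
      obtain ⟨⟨hes, hu⟩, ⟨_, hv⟩⟩ := he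
      induction e with
      | h a b =>
        rw [mem_singleton]
        have hab : G.Adj a b := hes
        rcases Sym2.mem_iff.mp hu with rfl | rfl <;> rcases Sym2.mem_iff.mp hv with rfl | rfl <;>
          first
          | exact absurd rfl huv.ne
          | exact absurd rfl hab.ne
          | simp [Sym2.eq_swap]
    have h2 : E2.card + (G.incidenceFinset u ∩ G.incidenceFinset v).card
        = G.degree u + G.degree v := by
      rw [hE2, Finset.card_union_add_card_inter, SimpleGraph.card_incidenceFinset_eq_degree,
        SimpleGraph.card_incidenceFinset_eq_degree]
    have hle : (G.incidenceFinset u ∩ G.incidenceFinset v).card ≤ 1 := by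
      calc _ ≤ ({s(u,v)} : Finset (Sym2 V)).card := Finset.card_le_card hinter
        _ = 1 := Finset.card_singleton _
    omega
  -- E3 lower bound by double counting
  have hE3card : n - A.card ≤ E3.card := by
    have hdc : (Finset.univ \ A).card * 2 ≤ E3.card * 2 := by
      apply Finset.card_mul_le_card_mul (fun w e => w ∈ e)
      · intro w hw
        have hwA : w ∉ A := (mem_sdiff.mp hw).2
        have hsub2 : G.incidenceFinset w ⊆ E3.bipartiteAbove (fun w e => w ∈ e) w := by
          intro e he
          rw [SimpleGraph.mem_incidenceFinset] at he
          obtain ⟨hes, hwe⟩ := he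
          rw [mem_bipartiteAbove]
          exact ⟨mem_filter.mpr ⟨SimpleGraph.mem_edgeFinset.mpr hes, w, hwe, hwA⟩, hwe⟩
        calc 2 ≤ G.degree w := hdeg w
          _ = (G.incidenceFinset w).card := (SimpleGraph.card_incidenceFinset_eq_degree _ _).symm
          _ ≤ _ := Finset.card_le_card hsub2
      · intro e he
        have hes := SimpleGraph.mem_edgeFinset.mp (mem_filter.mp he).1
        induction e with
        | h a b =>
          have : (Finset.univ \ A).bipartiteBelow (fun w e => w ∈ e) s(a, b) ⊆ {a, b} := by
            intro w hw
            rcases Sym2.mem_iff.mp ((Finset.mem_bipartiteBelow _).mp hw).2 with rfl | rfl <;> simp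
          calc _ ≤ ({a, b} : Finset V).card := Finset.card_le_card this
            _ ≤ 2 := Finset.card_insert_le _ _ |>.trans (by simp)
    have h1 : (Finset.univ \ A).card = n - A.card := by
      rw [Finset.card_sdiff_of_subset (Finset.subset_univ A), Finset.card_univ, hn]
    omega
  have hAcard : A.card ≤ G.degree u + G.degree v := by
    calc A.card ≤ (G.neighborFinset u).card + (G.neighborFinset v).card := Finset.card_union_le _ _
      _ = _ := by rw [SimpleGraph.card_neighborFinset_eq_degree,
          SimpleGraph.card_neighborFinset_eq_degree]
  have hAn : A.card ≤ n := by
    rw [hn, ← Finset.card_univ]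
    exact Finset.card_le_card (Finset.subset_univ A)
  have hdu : 2 ≤ G.degree u := hdeg u
  have key : S.card + n ≤ m + 1 := by omega
  rw [hcard]
  have : (S.card : ℝ) + n ≤ m + 1 := by exact_mod_cast key
  linarith
end

section
/- For any graph G with n vertices and m edges (m ≤ C(n,2)), the number of induced copies of K_{1,2} ⊔ K_1 (a path with two edges plus an isolated vertex, as a 4-vertex induced subgraph) in G is at most m·n²/8. -/
open Finset

/-- for a graph G with n vertices and m ≤ C(n,2) edges, the number
of induced copies of K_{1,2} ⊔ K₁ is at most m·n²/8. We count ordered tuples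
(c, l₁, l₂, w) where c is the star centre, l₁, l₂ its leaves and w the isolated
vertex; each induced copy corresponds to exactly 2 such tuples (swapping the
leaves), so the bound reads (ordered count) ≤ 2·m·n²/8 = m·n²/4. -/
theorem stmt_5 {V : Type*} [Fintype V] (G : SimpleGraph V) (n m : ℕ)
    (hn : n = Fintype.card V) (hm : m = G.edgeSet.ncard)
    (hmn : m ≤ n.choose 2) :
    (Nat.card {q : V × V × V × V //
        G.Adj q.1 q.2.1 ∧ G.Adj q.1 q.2.2.1 ∧ q.2.1 ≠ q.2.2.1 ∧
        ¬ G.Adj q.2.1 q.2.2.1 ∧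
        q.2.2.2 ≠ q.1 ∧ q.2.2.2 ≠ q.2.1 ∧ q.2.2.2 ≠ q.2.2.1 ∧
        ¬ G.Adj q.1 q.2.2.2 ∧ ¬ G.Adj q.2.1 q.2.2.2 ∧ ¬ G.Adj q.2.2.1 q.2.2.2} : ℝ)
      ≤ m * n ^ 2 / 4 := by
  classical
  set P : V × V × V × V → Prop := fun q =>
        G.Adj q.1 q.2.1 ∧ G.Adj q.1 q.2.2.1 ∧ q.2.1 ≠ q.2.2.1 ∧
        ¬ G.Adj q.2.1 q.2.2.1 ∧
        q.2.2.2 ≠ q.1 ∧ q.2.2.2 ≠ q.2.1 ∧ q.2.2.2 ≠ q.2.2.1 ∧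
        ¬ G.Adj q.1 q.2.2.2 ∧ ¬ G.Adj q.2.1 q.2.2.2 ∧ ¬ G.Adj q.2.2.1 q.2.2.2 with hP
  have hcard : Nat.card {q : V × V × V × V // P q} = (univ.filter P).card := by
    rw [Nat.card_eq_fintype_card, Fintype.card_subtype]
  have hedge : m = G.edgeFinset.card := by
    rw [hm, SimpleGraph.edgeFinset, Set.ncard_eq_toFinset_card']
  -- fiberwise decomposition
  have hfib : (univ.filter P).card =
      ∑ e ∈ G.edgeFinset, ((univ.filter P).filter
        (fun q : V × V × V × V => s(q.1, q.2.1) = e)).card := by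
    apply Finset.card_eq_sum_card_fiberwise
    intro q hq
    simp only [mem_coe, mem_filter, mem_univ, true_and] at hq ⊢
    rw [SimpleGraph.mem_edgeFinset, SimpleGraph.mem_edgeSet]
    exact hq.1
  have hkey : ∀ e ∈ G.edgeFinset,
      4 * ((univ.filter P).filter (fun q : V × V × V × V => s(q.1, q.2.1) = e)).card
        ≤ n ^ 2 := by
    intro e he
    induction e using Sym2.inductionOn with
    | hf u v =>
      have hadj : G.Adj u v := by
        rwa [SimpleGraph.mem_edgeFinset, SimpleGraph.mem_edgeSet] at he
      set A : Finset V := univ.filter (fun l => (G.Adj u l ∨ G.Adj v l) ∧ l ≠ u ∧ l ≠ v)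
        with hA
      set B : Finset V := univ.filter
        (fun w => ¬ G.Adj u w ∧ ¬ G.Adj v w ∧ w ≠ u ∧ w ≠ v) with hB
      have hsub : ((univ.filter P).filter
          (fun q : V × V × V × V => s(q.1, q.2.1) = s(u, v))).card ≤ (A ×ˢ B).card := by
        apply Finset.card_le_card_of_injOn (fun q => (q.2.2.1, q.2.2.2))
        · rintro ⟨c, l1, l2, w⟩ hq
          simp only [mem_coe, mem_filter, mem_univ, true_and, hP] at hq
          obtain ⟨⟨h1, h2, h3, h4, h5, h6, h7, h8, h9, h10⟩, heq⟩ := hq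
          rw [Sym2.eq_iff] at heq
          simp only [mem_coe, Finset.mem_product, hA, hB, mem_filter, mem_univ, true_and]
          rcases heq with ⟨hc, hl⟩ | ⟨hc, hl⟩ <;> subst hc <;> subst hl
          · exact ⟨⟨Or.inl h2, h2.ne', h3.symm⟩, h8, h9, h5, h6⟩
          · exact ⟨⟨Or.inr h2, h3.symm, h2.ne'⟩, h9, h8, h6, h5⟩
        · rintro ⟨c, l1, l2, w⟩ hq ⟨c', l1', l2', w'⟩ hq' hpair
          simp only [Prod.mk.injEq] at hpair
          obtain ⟨rfl, rfl⟩ := hpair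
          simp only [mem_coe, mem_filter, mem_univ, true_and, hP] at hq hq'
          obtain ⟨⟨h1, h2, h3, h4, _⟩, heq⟩ := hq
          obtain ⟨⟨h1', h2', h3', h4', _⟩, heq'⟩ := hq'
          rw [Sym2.eq_iff] at heq heq'
          rcases heq with ⟨hc, hl⟩ | ⟨hc, hl⟩ <;> rcases heq' with ⟨hc', hl'⟩ | ⟨hc', hl'⟩
          · simp only [Prod.mk.injEq, hc, hc', hl, hl', and_self, true_and]
          · exact absurd h2' (by rw [hc', ← hl]; exact h4)
          · exact absurd h2 (by rw [hc, ← hl']; exact h4')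
          · simp only [Prod.mk.injEq, hc, hc', hl, hl', and_self, true_and]
      rw [Finset.card_product] at hsub
      have hdisj : Disjoint A B := by
        rw [Finset.disjoint_left]
        intro a ha hb
        simp only [hA, hB, mem_filter, mem_univ, true_and] at ha hb
        rcases ha.1 with h | h
        · exact hb.1 h
        · exact hb.2.1 h
      have hsum : A.card + B.card ≤ n := by
        rw [← Finset.card_union_of_disjoint hdisj, hn]
        exact Finset.card_le_univ _
      have h1 : 4 * (A.card * B.card) ≤ (A.card + B.card) ^ 2 := by
        nlinarith [two_mul_le_add_sq A.card B.card]
      have h2 : (A.card + B.card) ^ 2 ≤ n ^ 2 := Nat.pow_le_pow_left hsum 2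
      calc 4 * ((univ.filter P).filter
            (fun q : V × V × V × V => s(q.1, q.2.1) = s(u, v))).card
          ≤ 4 * (A.card * B.card) := Nat.mul_le_mul_left _ hsub
        _ ≤ (A.card + B.card) ^ 2 := h1
        _ ≤ n ^ 2 := h2
  have hmain : 4 * (univ.filter P).card ≤ m * n ^ 2 := by
    rw [hfib, Finset.mul_sum, hedge]
    calc ∑ e ∈ G.edgeFinset, 4 * ((univ.filter P).filter
          (fun q : V × V × V × V => s(q.1, q.2.1) = e)).card
        ≤ ∑ _e ∈ G.edgeFinset, n ^ 2 := Finset.sum_le_sum hkey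
      _ = G.edgeFinset.card * n ^ 2 := by rw [Finset.sum_const, smul_eq_mul]
  rw [hcard, le_div_iff₀ (by norm_num : (0:ℝ) < 4)]
  calc ((univ.filter P).card : ℝ) * 4 = (4 * (univ.filter P).card : ℕ) := by push_cast; ring
    _ ≤ (m * n ^ 2 : ℕ) := by exact_mod_cast hmain
    _ = (m : ℝ) * n ^ 2 := by push_cast; ring
end

section
/- Fix an integer i ≥ 2 and reals n > 1, 0 < p < 1. Define u_j = log(p) − log(n·p²)/j for each integer j ≥ 2, and c_i = 1/(2 + √((i+1)/(i−1))). Assume n·p² < 1 (so that u_i, u_{i+1} < 0). Then i²·u_i² ≥ (i+1)(i−1)·u_{i+1}² if and only if p ≥ n^{−1+c_i}. -/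
/-- Claim 6.12. With u_j = log p - log(np²)/j and
c_i = 1/(2 + √((i+1)/(i-1))), assuming np² < 1 we have
i²·u_i² ≥ (i+1)(i-1)·u_{i+1}² if and only if p ≥ n^(-1+c_i). -/
theorem stmt_8 (i : ℕ) (hi : 2 ≤ i) (n p : ℝ) (hn : 1 < n) (hp : 0 < p) (hp1 : p < 1)
    (hnp : n * p ^ 2 < 1) :
    ((i : ℝ) ^ 2 * (Real.log p - Real.log (n * p ^ 2) / i) ^ 2
        ≥ ((i : ℝ) + 1) * ((i : ℝ) - 1)
          * (Real.log p - Real.log (n * p ^ 2) / ((i : ℝ) + 1)) ^ 2)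
      ↔ p ≥ n ^ (-1 + 1 / (2 + Real.sqrt (((i : ℝ) + 1) / ((i : ℝ) - 1))) : ℝ) := by
  have hi' : (2:ℝ) ≤ (i:ℝ) := by exact_mod_cast hi
  have hn0 : (0:ℝ) < n := by linarith
  have hA : 0 < Real.log n := Real.log_pos hn
  have hL : Real.log p < 0 := Real.log_neg hp hp1
  set L := Real.log p with hLdef
  set A := Real.log n with hAdef
  have hM : Real.log (n * p ^ 2) = A + 2 * L := by
    rw [Real.log_mul (by positivity) (by positivity), Real.log_pow]; push_cast; ring
  have hi1 : (0:ℝ) < (i:ℝ) - 1 := by linarith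
  have hi1' : (0:ℝ) < (i:ℝ) + 1 := by linarith
  set s := Real.sqrt (((i:ℝ) - 1) / ((i:ℝ) + 1)) with hsdef
  have hs0 : 0 < s := Real.sqrt_pos.2 (by positivity)
  have hs2' : s ^ 2 = ((i:ℝ) - 1) / ((i:ℝ) + 1) := Real.sq_sqrt (by positivity)
  have hs2 : s ^ 2 * ((i:ℝ) + 1) = (i:ℝ) - 1 := by
    rw [hs2']; field_simp
  have hs1 : s < 1 := by nlinarith [hs2, hs0, hi1', sq_nonneg (s-1), sq_nonneg (s+1)]
  have ht : Real.sqrt (((i:ℝ) + 1) / ((i:ℝ) - 1)) = 1 / s := by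
    rw [show ((i:ℝ)+1)/((i:ℝ)-1) = ((((i:ℝ)-1))/(((i:ℝ)+1)))⁻¹ by field_simp,
      Real.sqrt_inv, one_div, hsdef]
  have ha : 0 < A - ((i:ℝ) - 2) * L := by
    nlinarith [mul_nonneg (show (0:ℝ) ≤ (i:ℝ)-2 by linarith) (show (0:ℝ) ≤ -L by linarith)]
  have hb : 0 < A - ((i:ℝ) - 1) * L := by
    nlinarith [mul_nonneg (show (0:ℝ) ≤ (i:ℝ)-1 by linarith) (show (0:ℝ) ≤ -L by linarith)]
  have hine : (i:ℝ) ≠ 0 := by positivity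
  have hL1 : (i:ℝ)^2 * (L - (A + 2*L)/(i:ℝ))^2 = (A - ((i:ℝ)-2)*L)^2 := by
    field_simp; ring
  have hL2 : ((i:ℝ)+1)*((i:ℝ)-1) * (L - (A+2*L)/((i:ℝ)+1))^2
      = (s * (A - ((i:ℝ)-1)*L))^2 := by
    have e1 : L - (A+2*L)/((i:ℝ)+1) = (((i:ℝ)-1)*L - A)/((i:ℝ)+1) := by
      field_simp; ring
    rw [e1, mul_pow, div_pow, hs2']
    field_simp
    ring
  clear_value s L A
  rw [hM, hL1, hL2, ht]
  -- square equivalence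
  have hsq : (s * (A - ((i:ℝ)-1)*L))^2 ≤ (A - ((i:ℝ)-2)*L)^2
      ↔ s * (A - ((i:ℝ)-1)*L) ≤ A - ((i:ℝ)-2)*L := by
    constructor
    · intro h
      exact le_of_pow_le_pow_left₀ two_ne_zero ha.le h
    · intro h
      exact pow_le_pow_left₀ (le_of_lt (mul_pos hs0 hb)) h 2
  rw [ge_iff_le, hsq]
  -- rpow side
  have hx : (-1 + 1/(2 + 1/s)) * (2*s+1) = -(s+1) := by
    have h2s : (2:ℝ) + 1/s ≠ 0 := by positivity
    field_simp
    ring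
  have hrp : p ≥ n ^ ((-1 + 1/(2 + 1/s)) : ℝ) ↔ (-1 + 1/(2 + 1/s)) * A ≤ L := by
    rw [ge_iff_le, ← Real.log_le_log_iff (Real.rpow_pos_of_pos hn0 _) hp,
      Real.log_rpow hn0, ← hAdef, ← hLdef]
  rw [hrp]
  have hfac : (s+1) * ((A - ((i:ℝ)-2)*L) - s*(A - ((i:ℝ)-1)*L))
      = (1-s) * ((s+1)*A + (2*s+1)*L) := by linear_combination L * hs2
  constructor
  · intro h
    have h0 : 0 ≤ (1-s) * ((s+1)*A + (2*s+1)*L) := by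
      rw [← hfac]
      exact mul_nonneg (by linarith) (by linarith)
    have h1 : 0 ≤ (s+1)*A + (2*s+1)*L := by
      have := le_of_mul_le_mul_left
        (by linarith : (1-s)*0 ≤ (1-s)*((s+1)*A + (2*s+1)*L)) (by linarith : (0:ℝ) < 1-s)
      linarith
    have h3 : (0:ℝ) < 2*s+1 := by linarith
    have h2 : (-1 + 1/(2 + 1/s)) * A * (2*s+1) ≤ L * (2*s+1) := by
      calc (-1 + 1/(2 + 1/s)) * A * (2*s+1) = -(s+1)*A := by linear_combination A * hx
        _ ≤ (2*s+1)*L := by linarith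
        _ = L * (2*s+1) := by ring
    exact (mul_le_mul_iff_of_pos_right h3).mp h2
  · intro h
    have h3 : (0:ℝ) < 2*s+1 := by linarith
    have h2 : (-1 + 1/(2 + 1/s)) * A * (2*s+1) ≤ L * (2*s+1) :=
      mul_le_mul_of_nonneg_right h (le_of_lt h3)
    have h4 : -(s+1)*A ≤ (2*s+1)*L := by
      calc -(s+1)*A = (-1 + 1/(2 + 1/s)) * A * (2*s+1) := by linear_combination (-A) * hx
        _ ≤ L * (2*s+1) := h2
        _ = (2*s+1)*L := by ring
    have h1 : 0 ≤ (s+1)*A + (2*s+1)*L := by linarith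
    have h0 : 0 ≤ (s+1) * ((A - ((i:ℝ)-2)*L) - s*(A - ((i:ℝ)-1)*L)) := by
      rw [hfac]
      exact mul_nonneg (by linarith) h1
    have := le_of_mul_le_mul_left
      (by linarith : (s+1)*0 ≤ (s+1)*((A - ((i:ℝ)-2)*L) - s*(A - ((i:ℝ)-1)*L)))
      (by linarith : (0:ℝ) < s+1)
    linarith
end

section
/- There exists p_0 > 0 such that for all 0 < p ≤ p_0 and all 0 ≤ x ≤ b ≤ 1 − p − 1/log(1/p), we have I_p(p + x) ≥ (x²/b²)·I_p(p + b). -/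
open Real Set

noncomputable def F (p t : ℝ) : ℝ :=
  (p+t)*(Real.log (p+t) - Real.log p) + (1-p-t)*(Real.log (1-p-t) - Real.log (1-p))

noncomputable def F1 (p t : ℝ) : ℝ :=
  (Real.log (p+t) - Real.log p) - (Real.log (1-p-t) - Real.log (1-p))

noncomputable def F2 (p t : ℝ) : ℝ := 1/(p+t) + 1/(1-p-t)

noncomputable def H (p t : ℝ) : ℝ := t * F1 p t - 2 * F p t

noncomputable def H1 (p t : ℝ) : ℝ := t * F2 p t - F1 p t

noncomputable def H2 (p t : ℝ) : ℝ := t * (1/(1-p-t)^2 - 1/(p+t)^2)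

lemma dlog1 {p t : ℝ} (h1 : p + t ≠ 0) :
    HasDerivAt (fun t : ℝ => Real.log (p + t)) (1/(p+t)) t := by
  have d1 : HasDerivAt (fun t : ℝ => p + t) 1 t := (hasDerivAt_id t).const_add p
  simpa [Function.comp_def] using (Real.hasDerivAt_log h1).comp t d1

lemma dlog2 {p t : ℝ} (h2 : 1 - p - t ≠ 0) :
    HasDerivAt (fun t : ℝ => Real.log (1 - p - t)) (-(1/(1-p-t))) t := by
  have d2 : HasDerivAt (fun t : ℝ => 1 - p - t) (-1) t := by
    simpa using ((hasDerivAt_id t).const_sub (1 - p) : HasDerivAt (fun t : ℝ => (1-p) - t) (-1) t)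
  simpa [Function.comp_def] using (Real.hasDerivAt_log h2).comp t d2

lemma hasDerivAt_F {p t : ℝ} (h1 : p + t ≠ 0) (h2 : 1 - p - t ≠ 0) :
    HasDerivAt (F p) (F1 p t) t := by
  have d1 : HasDerivAt (fun t : ℝ => p + t) 1 t := (hasDerivAt_id t).const_add p
  have d2 : HasDerivAt (fun t : ℝ => 1 - p - t) (-1) t := by
    simpa using ((hasDerivAt_id t).const_sub (1 - p) : HasDerivAt (fun t : ℝ => (1-p) - t) (-1) t)
  have h := (d1.mul ((dlog1 h1).sub_const (Real.log p))).add
      (d2.mul ((dlog2 h2).sub_const (Real.log (1-p))))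
  refine HasDerivAt.congr_deriv h (Eq.symm ?_)
  unfold F1
  field_simp [F1]
  ring

lemma hasDerivAt_F1 {p t : ℝ} (h1 : p + t ≠ 0) (h2 : 1 - p - t ≠ 0) :
    HasDerivAt (F1 p) (F2 p t) t := by
  have h := (((dlog1 h1).sub_const (Real.log p)).sub ((dlog2 h2).sub_const (Real.log (1-p))))
  refine HasDerivAt.congr_deriv h (Eq.symm ?_)
  simp [F2]

lemma hasDerivAt_H {p t : ℝ} (h1 : p + t ≠ 0) (h2 : 1 - p - t ≠ 0) :
    HasDerivAt (H p) (H1 p t) t := by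
  have h := ((hasDerivAt_id t).mul (hasDerivAt_F1 h1 h2)).sub ((hasDerivAt_F h1 h2).const_mul 2)
  refine HasDerivAt.congr_deriv h (Eq.symm ?_)
  simp [H1]
  ring

lemma hasDerivAt_H1 {p t : ℝ} (h1 : p + t ≠ 0) (h2 : 1 - p - t ≠ 0) :
    HasDerivAt (H1 p) (H2 p t) t := by
  have d1 : HasDerivAt (fun t : ℝ => p + t) 1 t := (hasDerivAt_id t).const_add p
  have d2 : HasDerivAt (fun t : ℝ => 1 - p - t) (-1) t := by
    simpa using ((hasDerivAt_id t).const_sub (1 - p) : HasDerivAt (fun t : ℝ => (1-p) - t) (-1) t)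
  have i1 : HasDerivAt (fun t : ℝ => (p+t)⁻¹) (-(1/(p+t)^2)) t := by
    have := d1.inv h1
    refine HasDerivAt.congr_deriv this (Eq.symm ?_)
    ring
  have i2 : HasDerivAt (fun t : ℝ => (1-p-t)⁻¹) (1/(1-p-t)^2) t := by
    have := d2.inv h2
    refine HasDerivAt.congr_deriv this (Eq.symm ?_)
    field_simp
  have dF2 : HasDerivAt (F2 p) (-(1/(p+t)^2) + 1/(1-p-t)^2) t := by
    have := i1.add i2
    refine HasDerivAt.congr_of_eventuallyEq this (Filter.Eventually.of_forall fun u => ?_)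
    simp [F2, one_div]
  have h := ((hasDerivAt_id t).mul dF2).sub (hasDerivAt_F1 h1 h2)
  refine HasDerivAt.congr_deriv h (Eq.symm ?_)
  show t * (1/(1-p-t)^2 - 1/(p+t)^2) = _
  simp only [F2, id]
  ring

-- Lemma A : H ≤ 0 on [0, 1/2 - p]
lemma H_nonpos_left {p : ℝ} (hp : 0 < p) (hp2 : p < 1/2) :
    ∀ t ∈ Icc (0:ℝ) (1/2 - p), H p t ≤ 0 := by
  have hmem : ∀ t ∈ Icc (0:ℝ) (1/2 - p), p + t ≠ 0 ∧ 1 - p - t ≠ 0 := by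
    intro t ht
    constructor <;> nlinarith [ht.1, ht.2]
  -- H1 is antitone on the interval
  have hH1anti : AntitoneOn (H1 p) (Icc (0:ℝ) (1/2 - p)) := by
    apply antitoneOn_of_hasDerivWithinAt_nonpos (convex_Icc _ _)
    · intro t ht
      exact (hasDerivAt_H1 (hmem t ht).1 (hmem t ht).2).continuousAt.continuousWithinAt
    · intro t ht
      rw [interior_Icc] at ht
      have h := hmem t ⟨le_of_lt ht.1, le_of_lt ht.2⟩
      exact (hasDerivAt_H1 h.1 h.2).hasDerivWithinAt
    · intro t ht
      rw [interior_Icc] at ht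
      have h1 : (0:ℝ) < p + t := by nlinarith [ht.1]
      have h2 : (0:ℝ) < 1 - p - t := by nlinarith [ht.2]
      have hle : p + t ≤ 1 - p - t := by nlinarith [ht.2]
      have : 1/(1-p-t)^2 ≤ 1/(p+t)^2 := by
        apply one_div_le_one_div_of_le (by positivity)
        nlinarith
      have ht0 : (0:ℝ) ≤ t := le_of_lt ht.1
      unfold H2
      nlinarith
  have hH1zero : H1 p 0 = 0 := by simp [H1, F1]
  have hH1nonpos : ∀ t ∈ Icc (0:ℝ) (1/2 - p), H1 p t ≤ 0 := by
    intro t ht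
    have h0 : (0:ℝ) ∈ Icc (0:ℝ) (1/2 - p) := ⟨le_refl _, by linarith⟩
    calc H1 p t ≤ H1 p 0 := hH1anti h0 ht ht.1
    _ = 0 := hH1zero
  have hHanti : AntitoneOn (H p) (Icc (0:ℝ) (1/2 - p)) := by
    apply antitoneOn_of_hasDerivWithinAt_nonpos (convex_Icc _ _)
    · intro t ht
      exact (hasDerivAt_H (hmem t ht).1 (hmem t ht).2).continuousAt.continuousWithinAt
    · intro t ht
      rw [interior_Icc] at ht
      have h := hmem t ⟨le_of_lt ht.1, le_of_lt ht.2⟩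
      exact (hasDerivAt_H h.1 h.2).hasDerivWithinAt
    · intro t ht
      rw [interior_Icc] at ht
      exact hH1nonpos t ⟨le_of_lt ht.1, le_of_lt ht.2⟩
  intro t ht
  have hHzero : H p 0 = 0 := by simp [H, F]
  have h0 : (0:ℝ) ∈ Icc (0:ℝ) (1/2 - p) := ⟨le_refl _, by linarith⟩
  calc H p t ≤ H p 0 := hHanti h0 ht ht.1
  _ = 0 := hHzero

lemma log_one_sub_ge {m : ℝ} (h0 : 0 < m) (h2 : m ≤ 1/2) : -(2*m) ≤ Real.log (1-m) := by
  have hq : (0:ℝ) < 1 - m := by linarith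
  have h3 : Real.log (1-m)⁻¹ ≤ (1-m)⁻¹ - 1 := Real.log_le_sub_one_of_pos (by positivity)
  rw [Real.log_inv] at h3
  have h4 : (1-m)⁻¹ ≤ 1 + 2*m := by
    rw [inv_eq_one_div, div_le_iff₀ hq]
    nlinarith
  linarith

set_option maxHeartbeats 2000000 in
lemma H_endpoint {p : ℝ} (hp : 0 < p) (hp16 : p ≤ Real.exp (-16)) :
    H p (1 - p - 1 / Real.log (1/p)) ≤ 0 := by
  set L : ℝ := Real.log (1/p) with hLdef
  have hlogp : Real.log p = -L := by
    rw [hLdef, one_div, Real.log_inv]; ring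
  have hL16 : (16:ℝ) ≤ L := by
    rw [hLdef]
    have h1 : Real.exp (16:ℝ) ≤ 1/p := by
      rw [le_div_iff₀ hp]
      calc Real.exp 16 * p ≤ Real.exp 16 * Real.exp (-16) := by
            apply mul_le_mul_of_nonneg_left hp16 (Real.exp_pos _).le
      _ = 1 := by rw [← Real.exp_add]; norm_num
    calc (16:ℝ) = Real.log (Real.exp 16) := (Real.log_exp _).symm
    _ ≤ Real.log (1/p) := Real.log_le_log (Real.exp_pos _) h1
  have hL0 : (0:ℝ) < L := by linarith
  have hpL : p ≤ 1/L := by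
    have h1 : p = Real.exp (-L) := by rw [← hlogp, Real.exp_log hp]
    rw [h1, Real.exp_neg, inv_eq_one_div]
    exact one_div_le_one_div_of_le hL0 (by linarith [Real.add_one_le_exp L])
  have e1 : p + (1 - p - 1/L) = 1 - 1/L := by ring
  have e2 : 1 - p - (1 - p - 1/L) = 1/L := by ring
  have hm0 : (0:ℝ) < 1/L := by positivity
  have hm16 : 1/L ≤ 1/16 := one_div_le_one_div_of_le (by norm_num) hL16
  set a : ℝ := Real.log (1 - 1/L) with hadef
  set l : ℝ := Real.log L with hldef
  set c : ℝ := Real.log (1 - p) with hcdef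
  have hq0 : (0:ℝ) < 1 - 1/L := by linarith
  have hp1 : p < 1 := by nlinarith
  have h1p : (0:ℝ) < 1 - p := by linarith
  have ha0 : a ≤ 0 := Real.log_nonpos (by linarith) (by linarith)
  have ha1 : -(2*(1/L)) ≤ a := by
    have := log_one_sub_ge hm0 (le_trans hm16 (by norm_num))
    rw [← hadef] at this; exact this
  have hc0 : c ≤ 0 := Real.log_nonpos h1p.le (by linarith)
  have hc1 : -(2*(1/L)) ≤ c := by
    have h5 := log_one_sub_ge hp (by linarith : p ≤ 1/2)
    rw [← hcdef] at h5
    linarith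
  have hl0 : (0:ℝ) ≤ l := Real.log_nonneg (by linarith)
  set s : ℝ := Real.sqrt L with hsdef
  have hs2 : s^2 = L := Real.sq_sqrt hL0.le
  have hs0 : (0:ℝ) ≤ s := Real.sqrt_nonneg _
  have hs4 : (4:ℝ) ≤ s := by nlinarith
  have hl1 : l ≤ 2*(s - 1) := by
    have h2 : Real.log s ≤ s - 1 := Real.log_le_sub_one_of_pos (by linarith)
    have h3 : Real.log s = l / 2 := by rw [hldef, hsdef, Real.log_sqrt hL0.le]
    rw [h3] at h2; linarith
  have hmL : (1/L) * L = 1 := by field_simp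
  have hms1 : (1/L) * s ≤ 1/4 := by
    have h6 : ((1/L) * s) * s = 1 := by
      rw [mul_assoc, ← sq, hs2]; field_simp
    nlinarith
  have hHval : H p (1 - p - 1/L) =
      (1 - p - 1/L) * ((a - Real.log p) - (Real.log (1/L) - c))
      - 2 * ((1 - 1/L) * (a - Real.log p) + (1/L) * (Real.log (1/L) - c)) := by
    rw [H, F1, F, e1, e2]
  have hlogm : Real.log (1/L) = -l := by rw [one_div, Real.log_inv, hldef]
  rw [hHval, hlogp, hlogm]
  nlinarith [mul_nonneg (by linarith : (0:ℝ) ≤ a + 2*(1/L)) (by linarith : (0:ℝ) ≤ 1 + p - 1/L),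
    mul_nonneg (by linarith : (0:ℝ) ≤ -c) (by linarith : (0:ℝ) ≤ 1 + 1/L - p),
    mul_nonneg (by linarith : (0:ℝ) ≤ 2*s - 2 - l) (by linarith : (0:ℝ) ≤ 1 + 1/L - p),
    mul_nonneg hm0.le (by linarith : (0:ℝ) ≤ 1/L - p),
    mul_pos hL0 hp, sq_nonneg (s-4),
    mul_nonneg hs0 hp.le,
    hmL, hms1, hs2, hpL, hs4, hm16]

lemma pbounds {p : ℝ} (hp : 0 < p) (hp16 : p ≤ Real.exp (-16)) :
    16 ≤ Real.log (1/p) ∧ p ≤ 1/Real.log (1/p) := by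
  have hL16 : (16:ℝ) ≤ Real.log (1/p) := by
    have h1 : Real.exp (16:ℝ) ≤ 1/p := by
      rw [le_div_iff₀ hp]
      calc Real.exp 16 * p ≤ Real.exp 16 * Real.exp (-16) := by
            apply mul_le_mul_of_nonneg_left hp16 (Real.exp_pos _).le
      _ = 1 := by rw [← Real.exp_add]; norm_num
    calc (16:ℝ) = Real.log (Real.exp 16) := (Real.log_exp _).symm
    _ ≤ Real.log (1/p) := Real.log_le_log (Real.exp_pos _) h1
  refine ⟨hL16, ?_⟩
  set L : ℝ := Real.log (1/p) with hLdef
  have hlogp : Real.log p = -L := by rw [hLdef, one_div, Real.log_inv]; ring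
  have h1 : p = Real.exp (-L) := by rw [← hlogp, Real.exp_log hp]
  rw [h1, Real.exp_neg, inv_eq_one_div]
  exact one_div_le_one_div_of_le (by linarith) (by linarith [Real.add_one_le_exp L])

lemma H_nonpos {p : ℝ} (hp : 0 < p) (hp16 : p ≤ Real.exp (-16)) :
    ∀ t, 0 ≤ t → t ≤ 1 - p - 1/Real.log (1/p) → H p t ≤ 0 := by
  obtain ⟨hL16, hpL⟩ := pbounds hp hp16
  have hL0 : (0:ℝ) < Real.log (1/p) := by linarith
  have hm0 : (0:ℝ) < 1/Real.log (1/p) := by positivity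
  have hm16 : 1/Real.log (1/p) ≤ 1/16 := one_div_le_one_div_of_le (by norm_num) hL16
  have hp16' : p ≤ 1/16 := hpL.trans hm16
  set T : ℝ := 1 - p - 1/Real.log (1/p) with hTdef
  intro t ht0 htT
  by_cases hcase : t ≤ 1/2 - p
  · exact H_nonpos_left hp (by linarith) t ⟨ht0, hcase⟩
  · have hT : 1/2 - p < t := not_le.1 hcase
    have hdom : ∀ u ∈ Icc (1/2 - p) T, p + u ≠ 0 ∧ 1 - p - u ≠ 0 := by
      intro u hu
      constructor
      · nlinarith [hu.1]
      · have : u ≤ T := hu.2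
        rw [hTdef] at this
        nlinarith
    have hconv : ConvexOn ℝ (Icc (1/2 - p) T) (H p) := by
      apply convexOn_of_hasDerivWithinAt2_nonneg (convex_Icc _ _)
        (f' := H1 p) (f'' := H2 p)
      · intro u hu
        exact (hasDerivAt_H (hdom u hu).1 (hdom u hu).2).continuousAt.continuousWithinAt
      · intro u hu
        rw [interior_Icc] at hu
        have h := hdom u ⟨hu.1.le, hu.2.le⟩
        exact (hasDerivAt_H h.1 h.2).hasDerivWithinAt
      · intro u hu
        rw [interior_Icc] at hu
        have h := hdom u ⟨hu.1.le, hu.2.le⟩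
        exact (hasDerivAt_H1 h.1 h.2).hasDerivWithinAt
      · intro u hu
        rw [interior_Icc] at hu
        have hu0 : (0:ℝ) < u := by linarith [hu.1]
        have h2 : (0:ℝ) < 1 - p - u := by
          have := hu.2; rw [hTdef] at this; nlinarith
        have hle : 1 - p - u ≤ p + u := by linarith [hu.1]
        have : 1/(p+u)^2 ≤ 1/(1-p-u)^2 := by
          apply one_div_le_one_div_of_le (by positivity)
          nlinarith
        unfold H2
        nlinarith
    have hmem1 : (1/2 - p) ∈ Icc (1/2 - p) T := ⟨le_refl _, by linarith⟩
    have hmem2 : T ∈ Icc (1/2 - p) T := ⟨by linarith, le_refl _⟩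
    have hseg : t ∈ segment ℝ (1/2 - p) T := by
      rw [segment_eq_Icc (by linarith : (1/2 - p : ℝ) ≤ T)]
      exact ⟨hT.le, htT⟩
    have hmax := hconv.le_on_segment hmem1 hmem2 hseg
    have h1 : H p (1/2 - p) ≤ 0 :=
      H_nonpos_left hp (by linarith) _ ⟨by linarith, le_refl _⟩
    have h2 : H p T ≤ 0 := H_endpoint hp hp16
    calc H p t ≤ max (H p (1/2 - p)) (H p T) := hmax
    _ ≤ 0 := max_le h1 h2

-- main quotient inequality for 0 < x ≤ b ≤ T
lemma key {p x b : ℝ} (hp : 0 < p) (hp16 : p ≤ Real.exp (-16)) (hx : 0 < x) (hxb : x ≤ b)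
    (hbT : b ≤ 1 - p - 1/Real.log (1/p)) :
    F p b / b^2 ≤ F p x / x^2 := by
  obtain ⟨hL16, hpL⟩ := pbounds hp hp16
  have hL0 : (0:ℝ) < Real.log (1/p) := by linarith
  have hm0 : (0:ℝ) < 1/Real.log (1/p) := by positivity
  have hdom : ∀ u ∈ Icc x b, p + u ≠ 0 ∧ 1 - p - u ≠ 0 := by
    intro u hu
    constructor
    · nlinarith [hu.1]
    · nlinarith [hu.2]
  have hanti : AntitoneOn (fun t => F p t / t^2) (Icc x b) := by
    apply antitoneOn_of_hasDerivWithinAt_nonpos (convex_Icc _ _)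
      (f' := fun t => (F1 p t * t^2 - F p t * ((2:ℕ) * t^(2-1))) / (t^2)^2)
    · intro u hu
      have h := hdom u hu
      have hu0 : (0:ℝ) < u := lt_of_lt_of_le hx hu.1
      exact ((hasDerivAt_F h.1 h.2).div (hasDerivAt_pow 2 u)
        (by positivity)).continuousAt.continuousWithinAt
    · intro u hu
      rw [interior_Icc] at hu
      have h := hdom u ⟨hu.1.le, hu.2.le⟩
      have hu0 : (0:ℝ) < u := lt_of_lt_of_le hx hu.1.le
      exact ((hasDerivAt_F h.1 h.2).div (hasDerivAt_pow 2 u) (by positivity)).hasDerivWithinAt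
    · intro u hu
      rw [interior_Icc] at hu
      have hu0 : (0:ℝ) < u := lt_of_lt_of_le hx hu.1.le
      have hH : H p u ≤ 0 := H_nonpos hp hp16 u hu0.le (le_trans hu.2.le hbT)
      apply div_nonpos_of_nonpos_of_nonneg
      · have he : F1 p u * u^2 - F p u * ((2:ℕ) * u^(2-1)) = u * H p u := by
          rw [H]; push_cast; ring
        rw [he]
        exact mul_nonpos_of_nonneg_of_nonpos hu0.le hH
      · positivity
  exact hanti ⟨le_refl _, hxb⟩ ⟨hxb, le_refl _⟩ hxb


/-- Lemma A.3. There exists p₀ > 0 such that for all 0 < p ≤ p₀ and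
0 ≤ x ≤ b ≤ 1 - p - 1/log(1/p), we have I_p(p+x) ≥ (x²/b²)·I_p(p+b), where
I_p(q) = q log(q/p) + (1-q) log((1-q)/(1-p)). -/
theorem stmt_10 :
    ∃ p₀ : ℝ, 0 < p₀ ∧ ∀ p : ℝ, 0 < p → p ≤ p₀ →
      ∀ x b : ℝ, 0 ≤ x → x ≤ b → b ≤ 1 - p - 1 / Real.log (1 / p) →
        (p + x) * Real.log ((p + x) / p)
            + (1 - (p + x)) * Real.log ((1 - (p + x)) / (1 - p))
          ≥ (x ^ 2 / b ^ 2) *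
            ((p + b) * Real.log ((p + b) / p)
              + (1 - (p + b)) * Real.log ((1 - (p + b)) / (1 - p))) := by
  refine ⟨Real.exp (-16), Real.exp_pos _, ?_⟩
  intro p hp hple x b hx0 hxb hbT
  obtain ⟨hL16, hpL⟩ := pbounds hp hple
  have hL0 : (0:ℝ) < Real.log (1/p) := by linarith
  have hm0 : (0:ℝ) < 1/Real.log (1/p) := by positivity
  have hm16 : 1/Real.log (1/p) ≤ 1/16 := one_div_le_one_div_of_le (by norm_num) hL16
  have hp1 : p < 1 := by linarith
  have h1p : (0:ℝ) < 1 - p := by linarith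
  rcases eq_or_lt_of_le hx0 with hx | hx
  · rw [← hx]
    simp [div_self hp.ne', div_self h1p.ne']
  · have hb : 0 < b := lt_of_lt_of_le hx hxb
    have hpx : 0 < p + x := by linarith
    have h1px : 0 < 1 - p - x := by linarith
    have hpb : 0 < p + b := by linarith
    have h1pb : 0 < 1 - p - b := by linarith
    have ex : (p + x) * Real.log ((p + x) / p)
        + (1 - (p + x)) * Real.log ((1 - (p + x)) / (1 - p)) = F p x := by
      rw [Real.log_div hpx.ne' hp.ne', show (1:ℝ)-(p+x) = 1-p-x by ring,
        Real.log_div h1px.ne' h1p.ne', F]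
    have eb : (p + b) * Real.log ((p + b) / p)
        + (1 - (p + b)) * Real.log ((1 - (p + b)) / (1 - p)) = F p b := by
      rw [Real.log_div hpb.ne' hp.ne', show (1:ℝ)-(p+b) = 1-p-b by ring,
        Real.log_div h1pb.ne' h1p.ne', F]
    rw [ex, eb]
    have hkey := key hp hple hx hxb hbT
    have hx2 : (0:ℝ) < x^2 := by positivity
    calc x^2/b^2 * F p b = x^2 * (F p b / b^2) := by ring
    _ ≤ x^2 * (F p x / x^2) := mul_le_mul_of_nonneg_left hkey hx2.le
    _ = F p x := by field_simp
end

section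
/- Let λ > 0 and suppose F is a subcube of {0,1}^N with E[X | Y ∈ F] ≥ λ·E[X], where Y is a vector of N i.i.d. Bernoulli(p) random variables with p < 1/2, and X has complexity at most d. If additionally p < 1 − ((1+δ−ε)/(1+δ−ε/2))^{1/d} and λ = 1+δ−ε/2, then the one-supcube F^{(1)} of F satisfies E[X | Y ∈ F^{(1)}] ≥ (1+δ−ε)·E[X]. -/
open MeasureTheory

lemma cube_measurable {N : ℕ} (S : Finset (Fin N)) (b : Fin N → Bool) :
    MeasurableSet {y : Fin N → Bool | ∀ i ∈ S, y i = b i} := by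
  have h : {y : Fin N → Bool | ∀ i ∈ S, y i = b i}
      = ⋂ i ∈ S, (fun y : Fin N → Bool => y i) ⁻¹' {b i} := by
    ext y; simp
  rw [h]
  exact MeasurableSet.biInter S.countable_toSet fun i _ =>
    (measurable_pi_apply i) (measurableSet_singleton _)

lemma cube_int {Ω : Type*} [MeasurableSpace Ω] (μ : Measure Ω) [IsProbabilityMeasure μ]
    {N m : ℕ} (Y : Ω → (Fin N → Bool)) (hY : Measurable Y)
    (α : Fin m → ℝ) (J : Fin m → Finset (Fin N)) (c : Fin m → (Fin N → Bool))
    (S : Finset (Fin N)) (b : Fin N → Bool) :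
    ∫ ω in Y ⁻¹' {y | ∀ i ∈ S, y i = b i},
        (∑ j, α j * (if ∀ n ∈ J j, Y ω n = c j n then (1:ℝ) else 0)) ∂μ
      = ∑ j, α j * (μ (Y ⁻¹' {y | ∀ i ∈ S, y i = b i}
          ∩ Y ⁻¹' {y | ∀ n ∈ J j, y n = c j n})).toReal := by
  have hmeas : ∀ j : Fin m, MeasurableSet (Y ⁻¹' {y | ∀ n ∈ J j, y n = c j n}) :=
    fun j => hY (cube_measurable (J j) (c j))
  have heq : ∀ j : Fin m, (fun ω => α j * (if ∀ n ∈ J j, Y ω n = c j n then (1:ℝ) else 0))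
      = (Y ⁻¹' {y | ∀ n ∈ J j, y n = c j n}).indicator (fun _ => α j) := by
    intro j; funext ω
    by_cases h : ∀ n ∈ J j, Y ω n = c j n <;>
      simp [Set.indicator_apply, Set.mem_preimage, Set.mem_setOf_eq, h]
  rw [integral_finset_sum]
  · refine Finset.sum_congr rfl fun j _ => ?_
    rw [heq j, setIntegral_indicator (hmeas j), setIntegral_const, smul_eq_mul, mul_comm]
    rfl
  · intro j _
    rw [heq j]
    exact (integrable_const (α j)).indicator (hmeas j)

lemma cube_inter_measure {Ω : Type*} [MeasurableSpace Ω] (μ : Measure Ω)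
    {N : ℕ} (Y : Ω → (Fin N → Bool)) (p : ℝ)
    (hBer : ∀ (S : Finset (Fin N)) (b : Fin N → Bool),
      (μ {ω | ∀ i ∈ S, Y ω i = b i}).toReal = ∏ i ∈ S, (if b i then p else 1 - p))
    (S T : Finset (Fin N)) (b c : Fin N → Bool)
    (hcons : ∀ i ∈ T, i ∈ S → c i = b i) :
    (μ (Y ⁻¹' {y | ∀ i ∈ S, y i = b i} ∩ Y ⁻¹' {y | ∀ n ∈ T, y n = c n})).toReal
      = (∏ i ∈ S, (if b i then p else 1 - p)) * ∏ i ∈ T \ S, (if c i then p else 1 - p) := by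
  set g : Fin N → Bool := fun i => if i ∈ S then b i else c i with hg
  have hset : Y ⁻¹' {y | ∀ i ∈ S, y i = b i} ∩ Y ⁻¹' {y | ∀ n ∈ T, y n = c n}
      = {ω | ∀ i ∈ S ∪ T, Y ω i = g i} := by
    ext ω
    simp only [Set.mem_inter_iff, Set.mem_preimage, Set.mem_setOf_eq, Finset.mem_union, hg]
    constructor
    · rintro ⟨h1, h2⟩ i hi
      by_cases hiS : i ∈ S
      · simp [hiS, h1 i hiS]
      · simp only [hiS, if_false]
        exact h2 i (hi.resolve_left hiS)
    · intro h
      constructor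
      · intro i hi
        have := h i (Or.inl hi); simpa [hi] using this
      · intro i hi
        have := h i (Or.inr hi)
        by_cases hiS : i ∈ S
        · rw [hcons i hi hiS]; simpa [hiS] using this
        · simpa [hiS] using this
  rw [hset, hBer]
  have hsplit : S ∪ T = S ∪ (T \ S) := by rw [Finset.union_sdiff_self_eq_union]
  rw [hsplit, Finset.prod_union Finset.disjoint_sdiff]
  congr 1
  · exact Finset.prod_congr rfl fun i hi => by simp [hg, hi]
  · exact Finset.prod_congr rfl fun i hi => by
      simp [hg, (Finset.mem_sdiff.mp hi).2]

lemma cube_inter_zero {Ω : Type*} [MeasurableSpace Ω] (μ : Measure Ω)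
    {N : ℕ} (Y : Ω → (Fin N → Bool))
    (S T : Finset (Fin N)) (b c : Fin N → Bool)
    (i0 : Fin N) (hi0T : i0 ∈ T) (hi0S : i0 ∈ S) (hne : c i0 ≠ b i0) :
    (μ (Y ⁻¹' {y | ∀ i ∈ S, y i = b i} ∩ Y ⁻¹' {y | ∀ n ∈ T, y n = c n})).toReal = 0 := by
  have : Y ⁻¹' {y | ∀ i ∈ S, y i = b i} ∩ Y ⁻¹' {y | ∀ n ∈ T, y n = c n} = ∅ := by
    ext ω
    simp only [Set.mem_inter_iff, Set.mem_preimage, Set.mem_setOf_eq, Set.mem_empty_iff_false,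
      iff_false, not_and]
    intro h1 h2
    exact hne ((h2 i0 hi0T).symm.trans (h1 i0 hi0S))
  rw [this]; simp


/-- Lemma 2.5 (passing to the one-supcube). If Y is a vector of N
i.i.d. Bernoulli(p) variables with 0 < p < 1/2 and
p < 1 - ((1+δ-ε)/(1+δ-ε/2))^{1/d}, X has complexity at most d, and F is a subcube
with E[X | Y ∈ F] ≥ (1+δ-ε/2)·E[X], then its one-supcube F⁽¹⁾ satisfies
E[X | Y ∈ F⁽¹⁾] ≥ (1+δ-ε)·E[X]. -/
theorem stmt_11 {Ω : Type*} [MeasurableSpace Ω] (μ : Measure Ω) [IsProbabilityMeasure μ]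
    {N : ℕ} (Y : Ω → (Fin N → Bool)) (hY : Measurable Y)
    (p : ℝ) (hp0 : 0 < p) (hp : p < 1 / 2)
    (hBer : ∀ (S : Finset (Fin N)) (b : Fin N → Bool),
      (μ {ω | ∀ i ∈ S, Y ω i = b i}).toReal = ∏ i ∈ S, (if b i then p else 1 - p))
    (X : (Fin N → Bool) → ℝ) (d : ℕ) (hd : 0 < d)
    (hcomp : ∃ (m : ℕ) (α : Fin m → ℝ) (J : Fin m → Finset (Fin N))
        (c : Fin m → (Fin N → Bool)),
      (∀ j, 0 ≤ α j) ∧ (∀ j, (J j).card ≤ d) ∧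
      ∀ y, X y = ∑ j, α j * (if ∀ n ∈ J j, y n = c j n then (1 : ℝ) else 0))
    (ε δ : ℝ) (hε : 0 < ε) (hδ : 0 < δ)
    (hpd : p < 1 - ((1 + δ - ε) / (1 + δ - ε / 2)) ^ ((d : ℝ)⁻¹))
    (I : Finset (Fin N)) (x : Fin N → Bool)
    (hcond : (∫ ω in Y ⁻¹' {y | ∀ i ∈ I, y i = x i}, X (Y ω) ∂μ)
        / (μ (Y ⁻¹' {y | ∀ i ∈ I, y i = x i})).toReal
        ≥ (1 + δ - ε / 2) * ∫ ω, X (Y ω) ∂μ) :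
    (∫ ω in Y ⁻¹' {y | ∀ i ∈ I.filter (fun i => x i = true), y i = x i}, X (Y ω) ∂μ)
        / (μ (Y ⁻¹' {y | ∀ i ∈ I.filter (fun i => x i = true), y i = x i})).toReal
      ≥ (1 + δ - ε) * ∫ ω, X (Y ω) ∂μ := by
  obtain ⟨m, α, J, c, hα, hJ, hX⟩ := hcomp
  have hp1 : 1 - p > 0 := by linarith
  set I1 := I.filter (fun i => x i = true) with hI1
  have hI1sub : I1 ⊆ I := Finset.filter_subset _ _
  -- nonnegativity of X
  have hXnn : ∀ y, 0 ≤ X y := by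
    intro y; rw [hX]
    exact Finset.sum_nonneg fun j _ => mul_nonneg (hα j) (by positivity)
  -- E[X] ≥ 0
  have hEnn : 0 ≤ ∫ ω, X (Y ω) ∂μ := integral_nonneg fun ω => hXnn _
  -- numerator of goal nonneg
  have hLnn : 0 ≤ ∫ ω in Y ⁻¹' {y | ∀ i ∈ I1, y i = x i}, X (Y ω) ∂μ :=
    integral_nonneg fun ω => hXnn _
  by_cases hsign : 1 + δ - ε ≤ 0
  · have h1 : (1 + δ - ε) * ∫ ω, X (Y ω) ∂μ ≤ 0 := mul_nonpos_of_nonpos_of_nonneg hsign hEnn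
    exact le_trans h1 (div_nonneg hLnn ENNReal.toReal_nonneg)
  push_neg at hsign
  -- measures of the two cubes
  have hμA : (μ (Y ⁻¹' {y | ∀ i ∈ I, y i = x i})).toReal
      = ∏ i ∈ I, (if x i then p else 1 - p) := hBer I x
  have hμA1 : (μ (Y ⁻¹' {y | ∀ i ∈ I1, y i = x i})).toReal
      = ∏ i ∈ I1, (if x i then p else 1 - p) := hBer I1 x
  have hqpos : ∀ b : Bool, 0 < (if b then p else 1 - p) := by
    intro b; cases b <;> simpa using by linarith
  have hQA : 0 < (μ (Y ⁻¹' {y | ∀ i ∈ I, y i = x i})).toReal := by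
    rw [hμA]; exact Finset.prod_pos fun i _ => hqpos _
  have hQA1 : 0 < (μ (Y ⁻¹' {y | ∀ i ∈ I1, y i = x i})).toReal := by
    rw [hμA1]; exact Finset.prod_pos fun i _ => hqpos _
  -- rewrite the set integrals
  have hKint : ∫ ω in Y ⁻¹' {y | ∀ i ∈ I, y i = x i}, X (Y ω) ∂μ
      = ∑ j, α j * (μ (Y ⁻¹' {y | ∀ i ∈ I, y i = x i}
          ∩ Y ⁻¹' {y | ∀ n ∈ J j, y n = c j n})).toReal := by
    simp only [hX]; exact cube_int μ Y hY α J c I x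
  have hLint : ∫ ω in Y ⁻¹' {y | ∀ i ∈ I1, y i = x i}, X (Y ω) ∂μ
      = ∑ j, α j * (μ (Y ⁻¹' {y | ∀ i ∈ I1, y i = x i}
          ∩ Y ⁻¹' {y | ∀ n ∈ J j, y n = c j n})).toReal := by
    simp only [hX]; exact cube_int μ Y hY α J c I1 x
  set QA := (μ (Y ⁻¹' {y | ∀ i ∈ I, y i = x i})).toReal
  set QA1 := (μ (Y ⁻¹' {y | ∀ i ∈ I1, y i = x i})).toReal
  set M : Fin m → ℝ := fun j => (μ (Y ⁻¹' {y | ∀ i ∈ I, y i = x i}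
      ∩ Y ⁻¹' {y | ∀ n ∈ J j, y n = c j n})).toReal with hM
  set M1 : Fin m → ℝ := fun j => (μ (Y ⁻¹' {y | ∀ i ∈ I1, y i = x i}
      ∩ Y ⁻¹' {y | ∀ n ∈ J j, y n = c j n})).toReal with hM1
  -- key per-term inequality
  have hkey : ∀ j : Fin m, (1 - p) ^ d * (M j / QA) ≤ M1 j / QA1 := by
    intro j
    by_cases hcons : ∀ i ∈ J j, i ∈ I → c j i = x i
    · have hcons1 : ∀ i ∈ J j, i ∈ I1 → c j i = x i :=
        fun i hi hi1 => hcons i hi (hI1sub hi1)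
      have hMval : M j = QA * ∏ i ∈ J j \ I, (if c j i then p else 1 - p) := by
        rw [hM]; simp only
        rw [cube_inter_measure μ Y p hBer I (J j) x (c j) hcons, hμA]
      have hM1val : M1 j = QA1 * ∏ i ∈ J j \ I1, (if c j i then p else 1 - p) := by
        rw [hM1]; simp only
        rw [cube_inter_measure μ Y p hBer I1 (J j) x (c j) hcons1, hμA1]
      rw [hMval, hM1val, mul_div_cancel_left₀ _ (ne_of_gt hQA),
        mul_div_cancel_left₀ _ (ne_of_gt hQA1)]
      -- split J j \ I1 = (J j \ I) ∪ ((J j ∩ I) \ I1)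
      have hsplit : J j \ I1 = (J j \ I) ∪ ((J j ∩ I) \ I1) := by
        ext i
        simp only [Finset.mem_sdiff, Finset.mem_union, Finset.mem_inter, hI1,
          Finset.mem_filter]
        tauto
      have hdisj : Disjoint (J j \ I) ((J j ∩ I) \ I1) := by
        rw [Finset.disjoint_left]
        intro i hi hi2
        exact (Finset.mem_sdiff.mp hi).2 (Finset.mem_inter.mp (Finset.mem_sdiff.mp hi2).1).2
      rw [hsplit, Finset.prod_union hdisj]
      have hfalse : ∀ i ∈ (J j ∩ I) \ I1, (if c j i then p else 1 - p) = 1 - p := by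
        intro i hi
        obtain ⟨hiJI, hiI1⟩ := Finset.mem_sdiff.mp hi
        obtain ⟨hiJ, hiI⟩ := Finset.mem_inter.mp hiJI
        have hxfalse : x i = false := by
          by_contra hxt
          exact hiI1 (Finset.mem_filter.mpr ⟨hiI, by
            cases hxi : x i with
            | false => exact absurd hxi hxt
            | true => rfl⟩)
        rw [hcons i hiJ hiI, hxfalse]
        simp
      rw [Finset.prod_congr rfl hfalse, Finset.prod_const]
      rw [mul_comm ((1-p)^d) _]
      apply mul_le_mul_of_nonneg_left
      · apply pow_le_pow_of_le_one (by linarith) (by linarith)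
        calc ((J j ∩ I) \ I1).card ≤ (J j).card :=
              Finset.card_le_card (fun i hi =>
                (Finset.mem_inter.mp (Finset.mem_sdiff.mp hi).1).1)
          _ ≤ d := hJ j
      · exact Finset.prod_nonneg fun i _ => le_of_lt (hqpos _)
    · push_neg at hcons
      obtain ⟨i0, hi0J, hi0I, hne⟩ := hcons
      have hMzero : M j = 0 := by
        rw [hM]; simp only
        exact cube_inter_zero μ Y I (J j) x (c j) i0 hi0J hi0I hne
      rw [hMzero]
      simp only [zero_div, mul_zero]
      exact div_nonneg ENNReal.toReal_nonneg (le_of_lt hQA1)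
  -- combine
  have hsum : (1 - p) ^ d * ((∑ j, α j * M j) / QA) ≤ (∑ j, α j * M1 j) / QA1 := by
    rw [Finset.sum_div, Finset.sum_div, Finset.mul_sum]
    apply Finset.sum_le_sum
    intro j _
    have := hkey j
    calc (1 - p) ^ d * (α j * M j / QA)
        = α j * ((1 - p) ^ d * (M j / QA)) := by ring
      _ ≤ α j * (M1 j / QA1) := mul_le_mul_of_nonneg_left this (hα j)
      _ = α j * M1 j / QA1 := by ring
  -- convert hcond
  rw [hKint] at hcond
  rw [hLint]
  -- the exponent inequality
  set r : ℝ := (1 + δ - ε) / (1 + δ - ε / 2) with hr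
  have hlam : (0:ℝ) < 1 + δ - ε / 2 := by linarith
  have hrpos : 0 < r := div_pos hsign hlam
  have hrd : r ^ ((d:ℝ)⁻¹) ≤ 1 - p := by linarith
  have hpow : r ≤ (1 - p) ^ d := by
    have h1 : (r ^ ((d:ℝ)⁻¹)) ^ d ≤ (1 - p) ^ d :=
      pow_le_pow_left₀ (Real.rpow_nonneg (le_of_lt hrpos) _) hrd d
    have h2 : (r ^ ((d:ℝ)⁻¹)) ^ d = r := by
      rw [← Real.rpow_natCast (r ^ ((d:ℝ)⁻¹)) d, ← Real.rpow_mul (le_of_lt hrpos),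
        inv_mul_cancel₀ (by exact_mod_cast hd.ne' : (d:ℝ) ≠ 0), Real.rpow_one]
    linarith [h2 ▸ h1]
  have hfinal : 1 + δ - ε ≤ (1 - p) ^ d * (1 + δ - ε / 2) := by
    have := mul_le_mul_of_nonneg_right hpow (le_of_lt hlam)
    rwa [hr, div_mul_cancel₀ _ (ne_of_gt hlam)] at this
  -- chain
  calc (1 + δ - ε) * ∫ ω, X (Y ω) ∂μ
      ≤ ((1 - p) ^ d * (1 + δ - ε / 2)) * ∫ ω, X (Y ω) ∂μ :=
        mul_le_mul_of_nonneg_right hfinal hEnn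
    _ = (1 - p) ^ d * ((1 + δ - ε / 2) * ∫ ω, X (Y ω) ∂μ) := by ring
    _ ≤ (1 - p) ^ d * ((∑ j, α j * M j) / QA) :=
        mul_le_mul_of_nonneg_left hcond (by positivity)
    _ ≤ (∑ j, α j * M1 j) / QA1 := hsum
end

section
/- Let R ≥ 2 be an integer and G a graph in which the vertices of degree at most R form an independent set and δ(G) ≥ 2. With x_i (2 ≤ i ≤ R) the number of edges having an endpoint of degree i, and x_{>R} the number of edges with both endpoints of degree > R, the number of induced 4-cycles in G satisfies: N_ind(C_4, G) ≤ Σ_{i=2}^R (x_i/i)·C(i,2)·(Σ_{j>i, j≤R} x_j/j + x_i/(2i)) + Σ_{i=2}^R x_i·e(G)·(i−1)/R + x_{>R}²/4. -/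
open Finset

set_option maxHeartbeats 2000000 in
/-- Lemma 6.10. If in G the vertices of degree at most R (R ≥ 2) form
an independent set and δ(G) ≥ 2, then with x_i the number of edges having an
endpoint of degree exactly i and x_{>R} the number of edges with both endpoints of
degree > R, the number of induced 4-cycles satisfies the stated bound. Induced
4-cycles are counted as ordered 4-tuples (a,b,c,d), each unordered copy giving
exactly 8 tuples, whence the factor 8 on the right-hand side. -/
theorem stmt_14 {V : Type*} [Fintype V] (G : SimpleGraph V) (R : ℕ) (hR : 2 ≤ R)
    (hInd : ∀ v w : V, G.Adj v w →
      ¬((G.neighborSet v).ncard ≤ R ∧ (G.neighborSet w).ncard ≤ R))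
    (hmin : ∀ v : V, 2 ≤ (G.neighborSet v).ncard)
    (x : ℕ → ℕ)
    (hx : ∀ i, x i = {e ∈ G.edgeSet | ∃ v ∈ e, (G.neighborSet v).ncard = i}.ncard)
    (xgt : ℕ)
    (hxgt : xgt = {e ∈ G.edgeSet | ∀ v ∈ e, R < (G.neighborSet v).ncard}.ncard) :
    (Nat.card {q : V × V × V × V //
        G.Adj q.1 q.2.1 ∧ G.Adj q.2.1 q.2.2.1 ∧ G.Adj q.2.2.1 q.2.2.2 ∧
        G.Adj q.2.2.2 q.1 ∧ q.1 ≠ q.2.2.1 ∧ q.2.1 ≠ q.2.2.2 ∧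
        ¬ G.Adj q.1 q.2.2.1 ∧ ¬ G.Adj q.2.1 q.2.2.2} : ℝ)
      ≤ 8 * (∑ i ∈ Finset.Icc 2 R, ((x i : ℝ) / i) * (i.choose 2 : ℝ) *
              ((∑ j ∈ Finset.Icc (i + 1) R, (x j : ℝ) / j) + (x i : ℝ) / (2 * i))
            + ∑ i ∈ Finset.Icc 2 R,
                (x i : ℝ) * (G.edgeSet.ncard : ℝ) * ((i : ℝ) - 1) / R
            + (xgt : ℝ) ^ 2 / 4) := by
  classical
  have hdd : ∀ v : V, (G.neighborSet v).ncard = G.degree v := by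
    intro v
    rw [Set.ncard_eq_toFinset_card', ← SimpleGraph.neighborFinset_def]; rfl
  simp only [hdd] at hInd hmin hx hxgt
  set P : V × V × V × V → Prop := fun q =>
    G.Adj q.1 q.2.1 ∧ G.Adj q.2.1 q.2.2.1 ∧ G.Adj q.2.2.1 q.2.2.2 ∧
    G.Adj q.2.2.2 q.1 ∧ q.1 ≠ q.2.2.1 ∧ q.2.1 ≠ q.2.2.2 ∧
    ¬ G.Adj q.1 q.2.2.1 ∧ ¬ G.Adj q.2.1 q.2.2.2 with hP
  set T : Finset (V × V × V × V) := univ.filter P with hT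
  have hcardT : Nat.card {q : V × V × V × V // P q} = T.card := by
    rw [Nat.card_eq_fintype_card, Fintype.card_subtype]
  set I : Finset ℕ := Finset.Icc 2 R with hI
  set nf : ℕ → Finset V := fun i => univ.filter (fun v => G.degree v = i) with hnf
  set Hf : Finset V := univ.filter (fun v => R < G.degree v) with hHf
  set S3 : ℕ → Finset (V × V × V) :=
    fun i => (nf i).biUnion (fun v => {v} ×ˢ (G.neighborFinset v).offDiag) with hS3
  have hS3mem : ∀ (i : ℕ) (p : V × V × V), p ∈ S3 i ↔
      G.degree p.1 = i ∧ G.Adj p.1 p.2.1 ∧ G.Adj p.1 p.2.2 ∧ p.2.1 ≠ p.2.2 := by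
    intro i p
    simp only [hS3, Finset.mem_biUnion, Finset.mem_product, Finset.mem_singleton,
      Finset.mem_offDiag, SimpleGraph.mem_neighborFinset, hnf, Finset.mem_filter,
      Finset.mem_univ, true_and]
    constructor
    · rintro ⟨v, hv, hpv, h1, h2, h3⟩
      exact ⟨hpv ▸ hv, hpv ▸ h1, hpv ▸ h2, h3⟩
    · rintro ⟨h1, h2, h3, h4⟩
      exact ⟨p.1, h1, rfl, h2, h3, h4⟩
  have hsq : ∀ i : ℕ, i * i - i = i * (i - 1) := by
    intro i
    cases i with
    | zero => simp
    | succ k => rw [Nat.mul_succ, Nat.add_sub_cancel, Nat.succ_sub_one]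
  have hS3card : ∀ i : ℕ, (S3 i).card = (nf i).card * (i * (i - 1)) := by
    intro i
    rw [hS3]
    rw [Finset.card_biUnion]
    · rw [Finset.sum_congr rfl (g := fun _ => i * (i - 1)) ?_, Finset.sum_const, smul_eq_mul]
      intro v hv
      rw [hnf, Finset.mem_filter] at hv
      rw [Finset.card_product, Finset.card_singleton, one_mul, Finset.offDiag_card]
      rw [show #(G.neighborFinset v) = i from hv.2, hsq i]
    · intro a _ b _ hab
      show Disjoint _ _; rw [Finset.disjoint_left]
      rintro p hp hp'
      rw [Finset.mem_product, Finset.mem_singleton] at hp hp'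
      exact hab (hp.1 ▸ hp'.1)
  -- edge finsets
  set Fx : ℕ → Finset (Sym2 V) :=
    fun i => G.edgeFinset.filter (fun e => ∃ v ∈ e, G.degree v = i) with hFx
  set Fgt : Finset (Sym2 V) :=
    G.edgeFinset.filter (fun e => ∀ v ∈ e, R < G.degree v) with hFgt
  have hxF : ∀ i, x i = (Fx i).card := by
    intro i
    rw [hx i, ← Set.ncard_coe_finset]
    congr 1
    ext e
    simp [hFx, Set.mem_setOf_eq, SimpleGraph.mem_edgeFinset]
  have hxgtF : xgt = Fgt.card := by
    rw [hxgt, ← Set.ncard_coe_finset]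
    congr 1
    ext e
    simp [hFgt, Set.mem_setOf_eq, SimpleGraph.mem_edgeFinset]
  have heF : G.edgeSet.ncard = G.edgeFinset.card := by
    rw [← SimpleGraph.coe_edgeFinset, Set.ncard_coe_finset]
  -- (L1)
  have hL1 : ∀ i ∈ I, (nf i).card * i ≤ x i := by
    intro i hi
    rw [hI, Finset.mem_Icc] at hi
    rw [hxF i]
    have hcd : ((nf i).biUnion (fun v => {v} ×ˢ G.neighborFinset v)).card
        = (nf i).card * i := by
      rw [Finset.card_biUnion]
      · rw [Finset.sum_congr rfl (g := fun _ => i) ?_, Finset.sum_const, smul_eq_mul]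
        intro v hv
        rw [hnf, Finset.mem_filter] at hv
        rw [Finset.card_product, Finset.card_singleton, one_mul]
        exact hv.2
      · intro a _ b _ hab
        show Disjoint _ _; rw [Finset.disjoint_left]
        rintro p hp hp'
        rw [Finset.mem_product, Finset.mem_singleton] at hp hp'
        exact hab (hp.1 ▸ hp'.1)
    rw [← hcd]
    apply Finset.card_le_card_of_injOn (fun p => s(p.1, p.2))
    · intro p hp
      rw [Finset.mem_coe, Finset.mem_biUnion] at hp
      obtain ⟨v, hv, hp⟩ := hp
      rw [Finset.mem_product, Finset.mem_singleton] at hp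
      rw [hnf, Finset.mem_filter] at hv
      obtain ⟨-, hdv⟩ := hv
      obtain ⟨hp1, hp2⟩ := hp
      subst hp1
      rw [SimpleGraph.mem_neighborFinset] at hp2
      rw [Finset.mem_coe, hFx, Finset.mem_filter]
      refine ⟨SimpleGraph.mem_edgeFinset.mpr hp2, p.1, ?_, hdv⟩
      exact Sym2.mem_mk_left _ _
    · intro p hp q hq hpq
      rw [Finset.mem_coe, Finset.mem_biUnion] at hp hq
      obtain ⟨v, hv, hp'⟩ := hp
      obtain ⟨w, hw, hq'⟩ := hq
      rw [Finset.mem_product, Finset.mem_singleton] at hp' hq'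
      rw [hnf, Finset.mem_filter] at hv hw
      obtain ⟨hp1, hp2⟩ := hp'
      obtain ⟨hq1, hq2⟩ := hq'
      rw [SimpleGraph.mem_neighborFinset] at hp2 hq2
      subst hp1; subst hq1
      rw [Sym2.eq_iff] at hpq
      rcases hpq with ⟨h1, h2⟩ | ⟨h1, h2⟩
      · exact Prod.ext h1 h2
      · exfalso
        refine hInd p.1 p.2 hp2 ⟨?_, ?_⟩
        · rw [hv.2]; exact hi.2
        · rw [h2, hw.2]; exact hi.2
  -- (L2)
  have hL2 : R * Hf.card ≤ 2 * G.edgeFinset.card := by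
    calc R * Hf.card = ∑ _v ∈ Hf, R := by rw [Finset.sum_const, smul_eq_mul, mul_comm]
    _ ≤ ∑ v ∈ Hf, G.degree v := by
        apply Finset.sum_le_sum
        intro v hv
        rw [hHf, Finset.mem_filter] at hv
        exact le_of_lt hv.2
    _ ≤ ∑ v, G.degree v := Finset.sum_le_sum_of_subset (Finset.subset_univ _)
    _ = 2 * G.edgeFinset.card := G.sum_degrees_eq_twice_card_edges
  -- (L3)
  set OP : Finset (V × V) :=
    univ.filter (fun p => G.Adj p.1 p.2 ∧ R < G.degree p.1 ∧ R < G.degree p.2) with hOP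
  have hL3 : OP.card ≤ 2 * Fgt.card := by
    have := Finset.card_le_mul_card_image_of_maps_to
      (f := fun p : V × V => s(p.1, p.2)) (s := OP) (t := Fgt) ?_ 2 ?_
    · exact this
    · intro p hp
      rw [hOP, Finset.mem_filter] at hp
      obtain ⟨-, h1, h2, h3⟩ := hp
      rw [hFgt, Finset.mem_filter]
      refine ⟨SimpleGraph.mem_edgeFinset.mpr h1, ?_⟩
      intro v hv
      rw [Sym2.mem_iff] at hv
      rcases hv with rfl | rfl
      · exact h2
      · exact h3
    · intro b _
      induction b using Sym2.ind with
      | _ u w =>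
        refine le_trans (Finset.card_le_card (t := {(u, w), (w, u)}) ?_) ?_
        · intro p hp
          rw [Finset.mem_filter] at hp
          rw [Sym2.eq_iff] at hp
          rcases hp.2 with ⟨h1, h2⟩ | ⟨h1, h2⟩
          · simp [Prod.ext_iff, h1, h2]
          · simp [Prod.ext_iff, h1, h2]
        · exact le_trans (Finset.card_insert_le _ _) (by simp)
  have hPmem : ∀ q ∈ T, P q := fun q hq => (Finset.mem_filter.mp hq).2
  -- classes
  set C1 : ℕ → ℕ → Finset (V × V × V × V) := fun i j => T.filter (fun q =>
    G.degree q.1 = i ∧ G.degree q.2.2.1 = j ∧ G.degree q.1 ≤ G.degree q.2.2.1) with hC1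
  set C2 : ℕ → ℕ → Finset (V × V × V × V) := fun i j => T.filter (fun q =>
    G.degree q.1 = i ∧ G.degree q.2.2.1 = j ∧ G.degree q.2.2.1 < G.degree q.1) with hC2
  set C3 : ℕ → ℕ → Finset (V × V × V × V) := fun i j => T.filter (fun q =>
    G.degree q.2.1 = i ∧ G.degree q.2.2.2 = j ∧ G.degree q.2.1 ≤ G.degree q.2.2.2) with hC3
  set C4 : ℕ → ℕ → Finset (V × V × V × V) := fun i j => T.filter (fun q =>
    G.degree q.2.1 = i ∧ G.degree q.2.2.2 = j ∧ G.degree q.2.2.2 < G.degree q.2.1) with hC4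
  set C5 : ℕ → Finset (V × V × V × V) := fun i => T.filter (fun q =>
    G.degree q.1 = i ∧ R < G.degree q.2.2.1) with hC5
  set C6 : ℕ → Finset (V × V × V × V) := fun i => T.filter (fun q =>
    G.degree q.2.2.1 = i ∧ R < G.degree q.1) with hC6
  set C7 : ℕ → Finset (V × V × V × V) := fun i => T.filter (fun q =>
    G.degree q.2.1 = i ∧ R < G.degree q.2.2.2) with hC7
  set C8 : ℕ → Finset (V × V × V × V) := fun i => T.filter (fun q =>
    G.degree q.2.2.2 = i ∧ R < G.degree q.2.1) with hC8
  set C9 : Finset (V × V × V × V) := T.filter (fun q =>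
    R < G.degree q.1 ∧ R < G.degree q.2.1 ∧ R < G.degree q.2.2.1 ∧
    R < G.degree q.2.2.2) with hC9
  -- coverage
  have hcover : T ⊆ ((I ×ˢ I).biUnion (fun ij =>
        C1 ij.1 ij.2 ∪ C2 ij.1 ij.2 ∪ C3 ij.1 ij.2 ∪ C4 ij.1 ij.2)) ∪
      (I.biUnion (fun i => C5 i ∪ C6 i ∪ C7 i ∪ C8 i)) ∪ C9 := by
    intro q hq
    obtain ⟨h1, h2, h3, h4, h5, h6, h7, h8⟩ := hPmem q hq
    have hIa : ∀ v : V, G.degree v ≤ R → G.degree v ∈ I := fun v hv => by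
      rw [hI, Finset.mem_Icc]; exact ⟨hmin v, hv⟩
    by_cases la : G.degree q.1 ≤ R
    · by_cases lc : G.degree q.2.2.1 ≤ R
      · apply Finset.mem_union_left
        apply Finset.mem_union_left
        apply Finset.mem_biUnion.mpr
        refine ⟨(G.degree q.1, G.degree q.2.2.1),
          Finset.mem_product.mpr ⟨hIa _ la, hIa _ lc⟩, ?_⟩
        rcases le_or_gt (G.degree q.1) (G.degree q.2.2.1) with hle | hlt
        · apply Finset.mem_union_left; apply Finset.mem_union_left
          apply Finset.mem_union_left
          simp only [hC1]
          exact Finset.mem_filter.mpr ⟨hq, rfl, rfl, hle⟩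
        · apply Finset.mem_union_left; apply Finset.mem_union_left
          apply Finset.mem_union_right
          simp only [hC2]
          exact Finset.mem_filter.mpr ⟨hq, rfl, rfl, hlt⟩
      · apply Finset.mem_union_left
        apply Finset.mem_union_right
        apply Finset.mem_biUnion.mpr
        refine ⟨G.degree q.1, hIa _ la, ?_⟩
        apply Finset.mem_union_left; apply Finset.mem_union_left
        apply Finset.mem_union_left
        simp only [hC5]
        exact Finset.mem_filter.mpr ⟨hq, rfl, not_le.mp lc⟩
    · by_cases lc : G.degree q.2.2.1 ≤ R
      · apply Finset.mem_union_left
        apply Finset.mem_union_right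
        apply Finset.mem_biUnion.mpr
        refine ⟨G.degree q.2.2.1, hIa _ lc, ?_⟩
        apply Finset.mem_union_left; apply Finset.mem_union_left
        apply Finset.mem_union_right
        simp only [hC6]
        exact Finset.mem_filter.mpr ⟨hq, rfl, not_le.mp la⟩
      · by_cases lb : G.degree q.2.1 ≤ R
        · by_cases ld : G.degree q.2.2.2 ≤ R
          · apply Finset.mem_union_left
            apply Finset.mem_union_left
            apply Finset.mem_biUnion.mpr
            refine ⟨(G.degree q.2.1, G.degree q.2.2.2),
              Finset.mem_product.mpr ⟨hIa _ lb, hIa _ ld⟩, ?_⟩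
            rcases le_or_gt (G.degree q.2.1) (G.degree q.2.2.2) with hle | hlt
            · apply Finset.mem_union_left
              apply Finset.mem_union_right
              simp only [hC3]
              exact Finset.mem_filter.mpr ⟨hq, rfl, rfl, hle⟩
            · apply Finset.mem_union_right
              simp only [hC4]
              exact Finset.mem_filter.mpr ⟨hq, rfl, rfl, hlt⟩
          · apply Finset.mem_union_left
            apply Finset.mem_union_right
            apply Finset.mem_biUnion.mpr
            refine ⟨G.degree q.2.1, hIa _ lb, ?_⟩
            apply Finset.mem_union_left
            apply Finset.mem_union_right
            simp only [hC7]
            exact Finset.mem_filter.mpr ⟨hq, rfl, not_le.mp ld⟩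
        · by_cases ld : G.degree q.2.2.2 ≤ R
          · apply Finset.mem_union_left
            apply Finset.mem_union_right
            apply Finset.mem_biUnion.mpr
            refine ⟨G.degree q.2.2.2, hIa _ ld, ?_⟩
            apply Finset.mem_union_right
            simp only [hC8]
            exact Finset.mem_filter.mpr ⟨hq, rfl, not_le.mp lb⟩
          · apply Finset.mem_union_right
            simp only [hC9]
            exact Finset.mem_filter.mpr ⟨hq, not_le.mp la, not_le.mp lb, not_le.mp lc, not_le.mp ld⟩
  have classBound : ∀ (C : Finset (V × V × V × V)) (i : ℕ) (W : Finset V)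
      (f : V × V × V × V → (V × V × V) × V),
      (∀ q ∈ C, f q ∈ (S3 i) ×ˢ W) → Set.InjOn f C →
      C.card ≤ (nf i).card * (i * (i - 1)) * W.card := by
    intro C i W f hmaps hinj
    calc C.card ≤ ((S3 i) ×ˢ W).card := Finset.card_le_card_of_injOn f hmaps hinj
    _ = (nf i).card * (i * (i - 1)) * W.card := by rw [Finset.card_product, hS3card]
  -- class bounds
  have hB1 : ∀ i j, (C1 i j).card ≤
      (if i ≤ j then (nf i).card * (i * (i - 1)) * (nf j).card else 0) := by
    intro i j
    split_ifs with hij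
    · apply classBound _ i (nf j) (fun q => ((q.1, q.2.1, q.2.2.2), q.2.2.1))
      · intro q hq
        simp only [hC1, Finset.mem_filter] at hq
        obtain ⟨hqT, hd1, hd2, hd3⟩ := hq
        obtain ⟨h1, h2, h3, h4, h5, h6, h7, h8⟩ := hPmem q hqT
        rw [Finset.mem_product]
        refine ⟨(hS3mem _ _).mpr ⟨hd1, h1, h4.symm, h6⟩, ?_⟩
        simp only [hnf, Finset.mem_filter]
        exact ⟨Finset.mem_univ _, hd2⟩
      · intro a _ b _ h
        simp only [Prod.mk.injEq] at h
        simp only [Prod.ext_iff]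
        tauto
    · rw [Nat.le_zero, Finset.card_eq_zero]
      rw [Finset.eq_empty_iff_forall_notMem]
      intro q hq
      simp only [hC1, Finset.mem_filter] at hq
      obtain ⟨-, hd1, hd2, hd3⟩ := hq
      omega
  have hB2 : ∀ i j, (C2 i j).card ≤
      (if j < i then (nf j).card * (j * (j - 1)) * (nf i).card else 0) := by
    intro i j
    split_ifs with hij
    · apply classBound _ j (nf i) (fun q => ((q.2.2.1, q.2.1, q.2.2.2), q.1))
      · intro q hq
        simp only [hC2, Finset.mem_filter] at hq
        obtain ⟨hqT, hd1, hd2, hd3⟩ := hq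
        obtain ⟨h1, h2, h3, h4, h5, h6, h7, h8⟩ := hPmem q hqT
        rw [Finset.mem_product]
        refine ⟨(hS3mem _ _).mpr ⟨hd2, h2.symm, h3, h6⟩, ?_⟩
        simp only [hnf, Finset.mem_filter]
        exact ⟨Finset.mem_univ _, hd1⟩
      · intro a _ b _ h
        simp only [Prod.mk.injEq] at h
        simp only [Prod.ext_iff]
        tauto
    · rw [Nat.le_zero, Finset.card_eq_zero]
      rw [Finset.eq_empty_iff_forall_notMem]
      intro q hq
      simp only [hC2, Finset.mem_filter] at hq
      obtain ⟨-, hd1, hd2, hd3⟩ := hq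
      omega
  have hB3 : ∀ i j, (C3 i j).card ≤
      (if i ≤ j then (nf i).card * (i * (i - 1)) * (nf j).card else 0) := by
    intro i j
    split_ifs with hij
    · apply classBound _ i (nf j) (fun q => ((q.2.1, q.1, q.2.2.1), q.2.2.2))
      · intro q hq
        simp only [hC3, Finset.mem_filter] at hq
        obtain ⟨hqT, hd1, hd2, hd3⟩ := hq
        obtain ⟨h1, h2, h3, h4, h5, h6, h7, h8⟩ := hPmem q hqT
        rw [Finset.mem_product]
        refine ⟨(hS3mem _ _).mpr ⟨hd1, h1.symm, h2, h5⟩, ?_⟩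
        simp only [hnf, Finset.mem_filter]
        exact ⟨Finset.mem_univ _, hd2⟩
      · intro a _ b _ h
        simp only [Prod.mk.injEq] at h
        simp only [Prod.ext_iff]
        tauto
    · rw [Nat.le_zero, Finset.card_eq_zero]
      rw [Finset.eq_empty_iff_forall_notMem]
      intro q hq
      simp only [hC3, Finset.mem_filter] at hq
      obtain ⟨-, hd1, hd2, hd3⟩ := hq
      omega
  have hB4 : ∀ i j, (C4 i j).card ≤
      (if j < i then (nf j).card * (j * (j - 1)) * (nf i).card else 0) := by
    intro i j
    split_ifs with hij
    · apply classBound _ j (nf i) (fun q => ((q.2.2.2, q.2.2.1, q.1), q.2.1))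
      · intro q hq
        simp only [hC4, Finset.mem_filter] at hq
        obtain ⟨hqT, hd1, hd2, hd3⟩ := hq
        obtain ⟨h1, h2, h3, h4, h5, h6, h7, h8⟩ := hPmem q hqT
        rw [Finset.mem_product]
        refine ⟨(hS3mem _ _).mpr ⟨hd2, h3.symm, h4, h5.symm⟩, ?_⟩
        simp only [hnf, Finset.mem_filter]
        exact ⟨Finset.mem_univ _, hd1⟩
      · intro a _ b _ h
        simp only [Prod.mk.injEq] at h
        simp only [Prod.ext_iff]
        tauto
    · rw [Nat.le_zero, Finset.card_eq_zero]
      rw [Finset.eq_empty_iff_forall_notMem]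
      intro q hq
      simp only [hC4, Finset.mem_filter] at hq
      obtain ⟨-, hd1, hd2, hd3⟩ := hq
      omega
  have hB5 : ∀ i, (C5 i).card ≤ (nf i).card * (i * (i - 1)) * Hf.card := by
    intro i
    apply classBound _ i Hf (fun q => ((q.1, q.2.1, q.2.2.2), q.2.2.1))
    · intro q hq
      simp only [hC5, Finset.mem_filter] at hq
      obtain ⟨hqT, hd1, hd2⟩ := hq
      obtain ⟨h1, h2, h3, h4, h5, h6, h7, h8⟩ := hPmem q hqT
      rw [Finset.mem_product]
      refine ⟨(hS3mem _ _).mpr ⟨hd1, h1, h4.symm, h6⟩, ?_⟩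
      simp only [hHf, Finset.mem_filter]
      exact ⟨Finset.mem_univ _, hd2⟩
    · intro a _ b _ h
      simp only [Prod.mk.injEq] at h
      simp only [Prod.ext_iff]
      tauto
  have hB6 : ∀ i, (C6 i).card ≤ (nf i).card * (i * (i - 1)) * Hf.card := by
    intro i
    apply classBound _ i Hf (fun q => ((q.2.2.1, q.2.1, q.2.2.2), q.1))
    · intro q hq
      simp only [hC6, Finset.mem_filter] at hq
      obtain ⟨hqT, hd1, hd2⟩ := hq
      obtain ⟨h1, h2, h3, h4, h5, h6, h7, h8⟩ := hPmem q hqT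
      rw [Finset.mem_product]
      refine ⟨(hS3mem _ _).mpr ⟨hd1, h2.symm, h3, h6⟩, ?_⟩
      simp only [hHf, Finset.mem_filter]
      exact ⟨Finset.mem_univ _, hd2⟩
    · intro a _ b _ h
      simp only [Prod.mk.injEq] at h
      simp only [Prod.ext_iff]
      tauto
  have hB7 : ∀ i, (C7 i).card ≤ (nf i).card * (i * (i - 1)) * Hf.card := by
    intro i
    apply classBound _ i Hf (fun q => ((q.2.1, q.1, q.2.2.1), q.2.2.2))
    · intro q hq
      simp only [hC7, Finset.mem_filter] at hq
      obtain ⟨hqT, hd1, hd2⟩ := hq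
      obtain ⟨h1, h2, h3, h4, h5, h6, h7, h8⟩ := hPmem q hqT
      rw [Finset.mem_product]
      refine ⟨(hS3mem _ _).mpr ⟨hd1, h1.symm, h2, h5⟩, ?_⟩
      simp only [hHf, Finset.mem_filter]
      exact ⟨Finset.mem_univ _, hd2⟩
    · intro a _ b _ h
      simp only [Prod.mk.injEq] at h
      simp only [Prod.ext_iff]
      tauto
  have hB8 : ∀ i, (C8 i).card ≤ (nf i).card * (i * (i - 1)) * Hf.card := by
    intro i
    apply classBound _ i Hf (fun q => ((q.2.2.2, q.2.2.1, q.1), q.2.1))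
    · intro q hq
      simp only [hC8, Finset.mem_filter] at hq
      obtain ⟨hqT, hd1, hd2⟩ := hq
      obtain ⟨h1, h2, h3, h4, h5, h6, h7, h8⟩ := hPmem q hqT
      rw [Finset.mem_product]
      refine ⟨(hS3mem _ _).mpr ⟨hd1, h3.symm, h4, h5.symm⟩, ?_⟩
      simp only [hHf, Finset.mem_filter]
      exact ⟨Finset.mem_univ _, hd2⟩
    · intro a _ b _ h
      simp only [Prod.mk.injEq] at h
      simp only [Prod.ext_iff]
      tauto
  have hB9 : C9.card ≤ 2 * (Fgt.card * Fgt.card) := by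
    have hmaps : ∀ q ∈ C9, (fun q : V × V × V × V => ((q.1, q.2.1), s(q.2.2.1, q.2.2.2))) q
        ∈ OP ×ˢ Fgt := by
      intro q hq
      simp only [hC9, Finset.mem_filter] at hq
      obtain ⟨hqT, g1, g2, g3, g4⟩ := hq
      obtain ⟨h1, h2, h3, h4, h5, h6, h7, h8⟩ := hPmem q hqT
      rw [Finset.mem_product]
      constructor
      · simp only [hOP, Finset.mem_filter]
        exact ⟨Finset.mem_univ _, h1, g1, g2⟩
      · simp only [hFgt, Finset.mem_filter]
        refine ⟨SimpleGraph.mem_edgeFinset.mpr h3, ?_⟩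
        intro v hv
        rw [Sym2.mem_iff] at hv
        rcases hv with rfl | rfl
        · exact g3
        · exact g4
    have hinj : Set.InjOn (fun q : V × V × V × V => ((q.1, q.2.1), s(q.2.2.1, q.2.2.2))) C9 := by
      intro a ha b hb h
      simp only [Finset.mem_coe, hC9, Finset.mem_filter] at ha hb
      obtain ⟨haT, -⟩ := ha
      obtain ⟨hbT, -⟩ := hb
      obtain ⟨a1, a2, a3, a4, a5, a6, a7, a8⟩ := hPmem a haT
      obtain ⟨b1, b2, b3, b4, b5, b6, b7, b8⟩ := hPmem b hbT
      simp only [Prod.mk.injEq] at h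
      obtain ⟨⟨e1, e2⟩, e3⟩ := h
      rw [Sym2.eq_iff] at e3
      rcases e3 with ⟨f1, f2⟩ | ⟨f1, f2⟩
      · simp only [Prod.ext_iff]; tauto
      · exfalso
        apply b8
        rw [← e2, ← f1]
        exact a2
    calc C9.card ≤ (OP ×ˢ Fgt).card := Finset.card_le_card_of_injOn _ hmaps hinj
    _ = OP.card * Fgt.card := Finset.card_product _ _
    _ ≤ (2 * Fgt.card) * Fgt.card := Nat.mul_le_mul_right _ hL3
    _ = 2 * (Fgt.card * Fgt.card) := by ring
  -- master ℕ bound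
  have hUnion4 : ∀ (A B C D : Finset (V × V × V × V)),
      (A ∪ B ∪ C ∪ D).card ≤ A.card + B.card + C.card + D.card := by
    intro A B C D
    refine le_trans (Finset.card_union_le _ _) ?_
    refine Nat.add_le_add_right ?_ _
    refine le_trans (Finset.card_union_le _ _) ?_
    exact Nat.add_le_add_right (Finset.card_union_le _ _) _
  have key : T.card ≤
      (∑ p ∈ I ×ˢ I, (2 * (if p.1 ≤ p.2 then (nf p.1).card * (p.1 * (p.1 - 1)) * (nf p.2).card else 0)
          + 2 * (if p.2 < p.1 then (nf p.2).card * (p.2 * (p.2 - 1)) * (nf p.1).card else 0)))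
      + (∑ i ∈ I, 4 * ((nf i).card * (i * (i - 1)) * Hf.card))
      + 2 * (Fgt.card * Fgt.card) := by
    refine le_trans (Finset.card_le_card hcover) ?_
    refine le_trans (Finset.card_union_le _ _) ?_
    refine le_trans (Nat.add_le_add_right (Finset.card_union_le _ _) _) ?_
    refine Nat.add_le_add (Nat.add_le_add ?_ ?_) hB9
    · refine le_trans Finset.card_biUnion_le ?_
      refine Finset.sum_le_sum ?_
      intro p _
      refine le_trans (hUnion4 _ _ _ _) ?_
      have e1 := hB1 p.1 p.2
      have e2 := hB2 p.1 p.2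
      have e3 := hB3 p.1 p.2
      have e4 := hB4 p.1 p.2
      omega
    · refine le_trans Finset.card_biUnion_le ?_
      refine Finset.sum_le_sum ?_
      intro i _
      refine le_trans (hUnion4 _ _ _ _) ?_
      have e5 := hB5 i
      have e6 := hB6 i
      have e7 := hB7 i
      have e8 := hB8 i
      omega
  -- transform the double sum
  have keyA : (∑ p ∈ I ×ˢ I, (if p.1 ≤ p.2 then (nf p.1).card * (p.1 * (p.1 - 1)) * (nf p.2).card else 0))
      = ∑ i ∈ I, ∑ j ∈ Finset.Icc i R, (nf i).card * (i * (i - 1)) * (nf j).card := by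
    rw [Finset.sum_product]
    refine Finset.sum_congr rfl ?_
    intro i hi
    rw [hI, Finset.mem_Icc] at hi
    rw [← Finset.sum_filter]
    refine Finset.sum_congr ?_ (fun _ _ => rfl)
    rw [hI]
    ext k
    simp only [Finset.mem_filter, Finset.mem_Icc]
    omega
  have keyB : (∑ p ∈ I ×ˢ I, (if p.2 < p.1 then (nf p.2).card * (p.2 * (p.2 - 1)) * (nf p.1).card else 0))
      = ∑ i ∈ I, ∑ j ∈ Finset.Icc (i + 1) R, (nf i).card * (i * (i - 1)) * (nf j).card := by
    rw [Finset.sum_product, Finset.sum_comm]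
    refine Finset.sum_congr rfl ?_
    intro i hi
    rw [hI, Finset.mem_Icc] at hi
    rw [← Finset.sum_filter]
    refine Finset.sum_congr ?_ (fun _ _ => rfl)
    rw [hI]
    ext k
    simp only [Finset.mem_filter, Finset.mem_Icc]
    omega
  have key2 : T.card ≤
      2 * (∑ i ∈ I, ∑ j ∈ Finset.Icc i R, (nf i).card * (i * (i - 1)) * (nf j).card)
      + 2 * (∑ i ∈ I, ∑ j ∈ Finset.Icc (i + 1) R, (nf i).card * (i * (i - 1)) * (nf j).card)
      + (∑ i ∈ I, 4 * ((nf i).card * (i * (i - 1)) * Hf.card))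
      + 2 * (Fgt.card * Fgt.card) := by
    refine le_trans key ?_
    rw [Finset.sum_add_distrib, ← Finset.mul_sum, ← Finset.mul_sum, keyA, keyB]
  -- pass to the reals
  rw [hcardT, heF, hxgtF]
  have hR0 : (0 : ℝ) < (R : ℝ) := by
    have : (0 : ℕ) < R := by omega
    exact_mod_cast this
  have hNX : ∀ i ∈ I, ((nf i).card : ℝ) ≤ (x i : ℝ) / (i : ℝ) := by
    intro i hi
    have hi' := hi
    rw [hI, Finset.mem_Icc] at hi'
    have hi0 : (0 : ℝ) < (i : ℝ) := by
      have : (0 : ℕ) < i := by omega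
      exact_mod_cast this
    rw [le_div_iff₀ hi0]
    exact_mod_cast hL1 i hi
  have hHr : (Hf.card : ℝ) ≤ 2 * (G.edgeFinset.card : ℝ) / (R : ℝ) := by
    rw [le_div_iff₀ hR0]
    calc (Hf.card : ℝ) * (R : ℝ) = ((R * Hf.card : ℕ) : ℝ) := by push_cast; ring
    _ ≤ ((2 * G.edgeFinset.card : ℕ) : ℝ) := by exact_mod_cast hL2
    _ = 2 * (G.edgeFinset.card : ℝ) := by push_cast; ring
  have hchR : ∀ i ∈ I, ((i.choose 2 : ℕ) : ℝ) = ((i : ℝ) * ((i - 1 : ℕ) : ℝ)) / 2 := by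
    intro i hi
    rw [hI, Finset.mem_Icc] at hi
    have h2 : 2 ∣ i * (i - 1) := by
      rcases Nat.even_or_odd i with h | h
      · exact Dvd.dvd.mul_right h.two_dvd _
      · have : Even (i - 1) := Nat.Odd.sub_odd h odd_one
        exact Dvd.dvd.mul_left this.two_dvd _
    have hchN : i.choose 2 * 2 = i * (i - 1) := by
      rw [Nat.choose_two_right]
      exact Nat.div_mul_cancel h2
    have := congrArg (fun m : ℕ => (m : ℝ)) hchN
    push_cast at this
    linarith
  have main1 : 2 * (∑ i ∈ I, ∑ j ∈ Finset.Icc i R, ((nf i).card : ℝ) * ((i : ℝ) * ((i - 1 : ℕ) : ℝ)) * ((nf j).card : ℝ))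
      + 2 * (∑ i ∈ I, ∑ j ∈ Finset.Icc (i + 1) R, ((nf i).card : ℝ) * ((i : ℝ) * ((i - 1 : ℕ) : ℝ)) * ((nf j).card : ℝ))
      ≤ 8 * ∑ i ∈ I, ((x i : ℝ) / i) * (i.choose 2 : ℝ) *
          ((∑ j ∈ Finset.Icc (i + 1) R, (x j : ℝ) / j) + (x i : ℝ) / (2 * i)) := by
    rw [Finset.mul_sum, Finset.mul_sum, Finset.mul_sum, ← Finset.sum_add_distrib]
    refine Finset.sum_le_sum ?_
    intro i hi
    have hi' := hi
    rw [hI, Finset.mem_Icc] at hi'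
    have hi0 : (0 : ℝ) < (i : ℝ) := by
      have : (0 : ℕ) < i := by omega
      exact_mod_cast this
    have hsplit : Finset.Icc i R = insert i (Finset.Icc (i + 1) R) := by
      ext k
      simp only [Finset.mem_insert, Finset.mem_Icc]
      omega
    have hnotmem : i ∉ Finset.Icc (i + 1) R := by simp
    rw [hsplit, Finset.sum_insert hnotmem]
    set ci : ℝ := (i : ℝ) * ((i - 1 : ℕ) : ℝ) with hci
    set Ni : ℝ := ((nf i).card : ℝ) with hNi
    set u : ℝ := (x i : ℝ) / (i : ℝ) with hu
    set Ai : ℝ := ∑ j ∈ Finset.Icc (i + 1) R, ((nf j).card : ℝ) with hAi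
    set Ai' : ℝ := ∑ j ∈ Finset.Icc (i + 1) R, (x j : ℝ) / (j : ℝ) with hAi'
    have hci0 : 0 ≤ ci := by
      rw [hci]; exact mul_nonneg (Nat.cast_nonneg _) (Nat.cast_nonneg _)
    have hNi0 : 0 ≤ Ni := by rw [hNi]; exact Nat.cast_nonneg _
    have hu0 : 0 ≤ u := by
      rw [hu]; exact div_nonneg (Nat.cast_nonneg _) (Nat.cast_nonneg _)
    have hAi0 : 0 ≤ Ai := by
      rw [hAi]; exact Finset.sum_nonneg fun j _ => Nat.cast_nonneg _
    have hNu : Ni ≤ u := hNX i hi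
    have hAA : Ai ≤ Ai' := by
      rw [hAi, hAi']
      refine Finset.sum_le_sum ?_
      intro j hj
      rw [Finset.mem_Icc] at hj
      refine hNX j ?_
      rw [hI, Finset.mem_Icc]
      omega
    have hsum2 : ∑ j ∈ Finset.Icc (i + 1) R, Ni * ci * ((nf j).card : ℝ) = Ni * ci * Ai := by
      rw [hAi, Finset.mul_sum]
    rw [hsum2]
    have hc1 : Ni * ci ≤ u * ci := mul_le_mul_of_nonneg_right hNu hci0
    have huci : 0 ≤ u * ci := mul_nonneg hu0 hci0
    have h1 : Ni * ci * Ni ≤ u * ci * u := mul_le_mul hc1 hNu hNi0 huci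
    have h2 : Ni * ci * Ai ≤ u * ci * Ai' := mul_le_mul hc1 hAA hAi0 huci
    have hgoal2 : 2 * (Ni * ci * Ni + Ni * ci * Ai) + 2 * (Ni * ci * Ai)
        ≤ 2 * (u * ci * u + u * ci * Ai') + 2 * (u * ci * Ai') := by linarith
    refine le_trans hgoal2 ?_
    rw [hchR i hi]
    have hx2i : (x i : ℝ) / (2 * (i : ℝ)) = u / 2 := by
      rw [hu]; field_simp
    rw [hx2i]
    refine le_of_eq ?_
    ring
  have main2 : (∑ i ∈ I, 4 * (((nf i).card : ℝ) * ((i : ℝ) * ((i - 1 : ℕ) : ℝ)) * (Hf.card : ℝ)))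
      ≤ 8 * ∑ i ∈ I, (x i : ℝ) * (G.edgeFinset.card : ℝ) * ((i : ℝ) - 1) / (R : ℝ) := by
    rw [Finset.mul_sum]
    refine Finset.sum_le_sum ?_
    intro i hi
    have hi' := hi
    rw [hI, Finset.mem_Icc] at hi'
    have him : ((i - 1 : ℕ) : ℝ) = (i : ℝ) - 1 := by
      rw [Nat.cast_sub (by omega : 1 ≤ i)]
      simp
    rw [him]
    have hi1 : (0 : ℝ) ≤ (i : ℝ) - 1 := by
      have : ((1 : ℕ) : ℝ) ≤ ((i : ℕ) : ℝ) := by exact_mod_cast (by omega : (1:ℕ) ≤ i)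
      simpa using this
    have hNxi : ((nf i).card : ℝ) * (i : ℝ) ≤ (x i : ℝ) := by exact_mod_cast hL1 i hi
    have e1 : (((nf i).card : ℝ) * (i : ℝ)) * ((i : ℝ) - 1) ≤ (x i : ℝ) * ((i : ℝ) - 1) :=
      mul_le_mul_of_nonneg_right hNxi hi1
    have hHr0 : (0 : ℝ) ≤ (Hf.card : ℝ) := Nat.cast_nonneg _
    have e2 : (0 : ℝ) ≤ (x i : ℝ) * ((i : ℝ) - 1) := mul_nonneg (Nat.cast_nonneg _) hi1
    have e3 : 4 * ((((nf i).card : ℝ) * (i : ℝ)) * ((i : ℝ) - 1)) * (Hf.card : ℝ)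
        ≤ 4 * ((x i : ℝ) * ((i : ℝ) - 1)) * (2 * (G.edgeFinset.card : ℝ) / (R : ℝ)) := by
      exact mul_le_mul (mul_le_mul_of_nonneg_left e1 (by norm_num)) hHr hHr0
        (mul_nonneg (by norm_num) e2)
    calc 4 * (((nf i).card : ℝ) * ((i : ℝ) * ((i : ℝ) - 1)) * (Hf.card : ℝ))
        = 4 * ((((nf i).card : ℝ) * (i : ℝ)) * ((i : ℝ) - 1)) * (Hf.card : ℝ) := by ring
    _ ≤ 4 * ((x i : ℝ) * ((i : ℝ) - 1)) * (2 * (G.edgeFinset.card : ℝ) / (R : ℝ)) := e3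
    _ = 8 * ((x i : ℝ) * (G.edgeFinset.card : ℝ) * ((i : ℝ) - 1) / (R : ℝ)) := by ring
  have key3 : (T.card : ℝ) ≤
      2 * (∑ i ∈ I, ∑ j ∈ Finset.Icc i R, ((nf i).card : ℝ) * ((i : ℝ) * ((i - 1 : ℕ) : ℝ)) * ((nf j).card : ℝ))
      + 2 * (∑ i ∈ I, ∑ j ∈ Finset.Icc (i + 1) R, ((nf i).card : ℝ) * ((i : ℝ) * ((i - 1 : ℕ) : ℝ)) * ((nf j).card : ℝ))
      + (∑ i ∈ I, 4 * (((nf i).card : ℝ) * ((i : ℝ) * ((i - 1 : ℕ) : ℝ)) * (Hf.card : ℝ)))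
      + 2 * ((Fgt.card : ℝ) * (Fgt.card : ℝ)) := by exact_mod_cast key2
  have hgg : 2 * ((Fgt.card : ℝ) * (Fgt.card : ℝ)) = 8 * ((Fgt.card : ℝ) ^ 2 / 4) := by ring
  linarith [key3, main1, main2, hgg]
end

section
/- Let u_{xy} ≥ 0 for all pairs {x,y} from [n], and let 𝓛 ⊆ C([n],2) be any set of pairs. Let 𝓒 be the set of (unordered) 4-cycles on [n] all four of whose edges lie in 𝓛. Then Σ over 4-cycles (a_0,a_1,a_2,a_3) in 𝓒 of u_{a_0a_1}·u_{a_1a_2}·u_{a_2a_3}·u_{a_3a_0}·(1−u_{a_0a_2})·(1−u_{a_1a_3}) ≤ (1/4)·(Σ_{{x,y}∈𝓛} u_{xy})², provided all u values lie in [0,1]. -/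
open scoped Classical

private lemma key_ineq (ab bc cd da ac bd : ℝ)
    (h1 : ab ≤ 1) (h2 : bc ≤ 1) (h3 : cd ≤ 1) (h4 : da ≤ 1) (h5 : ac ≤ 1) (h6 : bd ≤ 1)
    (g1 : 0 ≤ ab) (g2 : 0 ≤ bc) (g3 : 0 ≤ cd) (g4 : 0 ≤ da) (g5 : 0 ≤ ac) (g6 : 0 ≤ bd) :
    ab*bc*cd*da*(1-ac)*(1-bd) + ab*bd*cd*ac*(1-da)*(1-bc) ≤ ab*cd := by
  have p1 : (0:ℝ) ≤ 1 - ac := by linarith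
  have p2 : (0:ℝ) ≤ 1 - bd := by linarith
  have p3 : (0:ℝ) ≤ 1 - da := by linarith
  have p4 : (0:ℝ) ≤ 1 - bc := by linarith
  have q1 : bc*da*(1-bd) ≤ 1 := by
    nlinarith [mul_nonneg g2 p3, mul_nonneg (mul_nonneg g2 g4) g6]
  have q2 : bd*(1-da)*(1-bc) ≤ 1 := by
    nlinarith [mul_nonneg g6 g4, mul_nonneg (mul_nonneg g2 g6) p3]
  have e1 : bc*da*(1-ac)*(1-bd) ≤ 1-ac := by nlinarith [mul_nonneg (by linarith : (0:ℝ) ≤ 1 - bc*da*(1-bd)) p1]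
  have e2 : bd*ac*(1-da)*(1-bc) ≤ ac := by nlinarith [mul_nonneg (by linarith : (0:ℝ) ≤ 1 - bd*(1-da)*(1-bc)) g5]
  have habcd : (0:ℝ) ≤ ab*cd := mul_nonneg g1 g3
  nlinarith [mul_nonneg habcd (by linarith : (0:ℝ) ≤ (1-ac) - bc*da*(1-ac)*(1-bd)),
    mul_nonneg habcd (by linarith : (0:ℝ) ≤ ac - bd*ac*(1-da)*(1-bc))]

private lemma key_ineq1 (ab bc cd da ac bd : ℝ)
    (h1 : ab ≤ 1) (h2 : bc ≤ 1) (h3 : cd ≤ 1) (h4 : da ≤ 1) (h5 : ac ≤ 1) (h6 : bd ≤ 1)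
    (g1 : 0 ≤ ab) (g2 : 0 ≤ bc) (g3 : 0 ≤ cd) (g4 : 0 ≤ da) (g5 : 0 ≤ ac) (g6 : 0 ≤ bd) :
    ab*bc*cd*da*(1-ac)*(1-bd) ≤ ab*cd := by
  have p1 : (0:ℝ) ≤ 1 - ac := by linarith
  have p2 : (0:ℝ) ≤ 1 - bd := by linarith
  have q1 : bc*da*(1-bd) ≤ 1 := by
    nlinarith [mul_nonneg g2 (by linarith : (0:ℝ) ≤ 1 - da), mul_nonneg (mul_nonneg g2 g4) g6]
  have e1 : bc*da*(1-ac)*(1-bd) ≤ 1-ac := by nlinarith [mul_nonneg (by linarith : (0:ℝ) ≤ 1 - bc*da*(1-bd)) p1]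
  have habcd : (0:ℝ) ≤ ab*cd := mul_nonneg g1 g3
  nlinarith [mul_nonneg habcd (by linarith : (0:ℝ) ≤ 1 - bc*da*(1-ac)*(1-bd))]

open scoped Classical in
/-- inequality (7.3). For weights u ∈ [0,1] and a set 𝓛 of pairs,
the weighted count of (induced-weighted) 4-cycles with all four edges in 𝓛 is at
most (1/4)(Σ_{{x,y}∈𝓛} u_{xy})². Here 4-cycles are counted as ordered tuples
(a₀,a₁,a₂,a₃) of pairwise-distinct vertices (8 tuples per unordered 4-cycle), and
the sum Σ over 𝓛 is taken over ordered pairs (2 per unordered pair), so the bound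
reads: LHS ≤ 8·(1/4)·(T/2)² = T²/2 where T is the ordered-pair sum. -/
theorem stmt_15 (n : ℕ) (u : Fin n → Fin n → ℝ) (hsym : ∀ x y, u x y = u y x)
    (h0 : ∀ x y, 0 ≤ u x y) (h1 : ∀ x y, u x y ≤ 1)
    (L : Fin n → Fin n → Prop) (hLsym : ∀ x y, L x y → L y x) :
    ∑ q ∈ Finset.univ.filter
        (fun q : Fin n × Fin n × Fin n × Fin n =>
          q.1 ≠ q.2.1 ∧ q.1 ≠ q.2.2.1 ∧ q.1 ≠ q.2.2.2 ∧ q.2.1 ≠ q.2.2.1 ∧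
          q.2.1 ≠ q.2.2.2 ∧ q.2.2.1 ≠ q.2.2.2 ∧
          L q.1 q.2.1 ∧ L q.2.1 q.2.2.1 ∧ L q.2.2.1 q.2.2.2 ∧ L q.2.2.2 q.1),
        u q.1 q.2.1 * u q.2.1 q.2.2.1 * u q.2.2.1 q.2.2.2 * u q.2.2.2 q.1 *
          (1 - u q.1 q.2.2.1) * (1 - u q.2.1 q.2.2.2)
      ≤ (∑ e ∈ Finset.univ.filter
            (fun e : Fin n × Fin n => L e.1 e.2 ∧ e.1 ≠ e.2), u e.1 e.2) ^ 2 / 2 := by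
  classical
  set E : Finset (Fin n × Fin n) :=
    Finset.univ.filter (fun e : Fin n × Fin n => L e.1 e.2 ∧ e.1 ≠ e.2) with hE
  set S : Finset (Fin n × Fin n × Fin n × Fin n) :=
    Finset.univ.filter (fun q : Fin n × Fin n × Fin n × Fin n =>
      q.1 ≠ q.2.1 ∧ q.1 ≠ q.2.2.1 ∧ q.1 ≠ q.2.2.2 ∧ q.2.1 ≠ q.2.2.1 ∧
      q.2.1 ≠ q.2.2.2 ∧ q.2.2.1 ≠ q.2.2.2 ∧ L q.1 q.2.1 ∧ L q.2.2.1 q.2.2.2) with hS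
  set t : (Fin n × Fin n × Fin n × Fin n) → ℝ := fun q =>
    u q.1 q.2.1 * u q.2.1 q.2.2.1 * u q.2.2.1 q.2.2.2 * u q.2.2.2 q.1 *
      (1 - u q.1 q.2.2.1) * (1 - u q.2.1 q.2.2.2) with ht
  set F : (Fin n × Fin n × Fin n × Fin n) → ℝ := fun q =>
    if L q.2.1 q.2.2.1 ∧ L q.2.2.2 q.1 then t q else 0 with hF
  -- rewrite LHS as sum over S of F
  have step1 : ∑ q ∈ Finset.univ.filter
        (fun q : Fin n × Fin n × Fin n × Fin n =>
          q.1 ≠ q.2.1 ∧ q.1 ≠ q.2.2.1 ∧ q.1 ≠ q.2.2.2 ∧ q.2.1 ≠ q.2.2.1 ∧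
          q.2.1 ≠ q.2.2.2 ∧ q.2.2.1 ≠ q.2.2.2 ∧
          L q.1 q.2.1 ∧ L q.2.1 q.2.2.1 ∧ L q.2.2.1 q.2.2.2 ∧ L q.2.2.2 q.1), t q
      = ∑ q ∈ S, F q := by
    rw [hF, ← Finset.sum_filter, hS, Finset.filter_filter]
    apply Finset.sum_congr
    · apply Finset.filter_congr
      intro q _
      constructor <;> (intro h; tauto)
    · intros; rfl
  -- the swap involution
  set φ : (Fin n × Fin n × Fin n × Fin n) → (Fin n × Fin n × Fin n × Fin n) :=
    fun q => (q.1, q.2.1, q.2.2.2, q.2.2.1) with hφ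
  have hφmem : ∀ q ∈ S, φ q ∈ S := by
    intro q hq
    rw [hS, Finset.mem_filter] at hq ⊢
    refine ⟨Finset.mem_univ _, ?_⟩
    obtain ⟨-, d1, d2, d3, d4, d5, d6, l1, l2⟩ := hq
    exact ⟨d1, d3, d2, d5, d4, fun h => d6 h.symm, l1, hLsym _ _ l2⟩
  have hφφ : ∀ q, φ (φ q) = q := by intro q; rfl
  have step2 : ∑ q ∈ S, F q = ∑ q ∈ S, F (φ q) :=
    (Finset.sum_nbij' (i := φ) (j := φ) hφmem hφmem (fun q _ => hφφ q) (fun q _ => hφφ q)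
      (fun q hq => rfl)).symm
  -- pointwise bound
  have step3 : ∀ q ∈ S, F q + F (φ q) ≤ u q.1 q.2.1 * u q.2.2.1 q.2.2.2 := by
    intro q hq
    obtain ⟨a, b, c, d⟩ := q
    simp only [hF, ht, hφ]
    have key := key_ineq (u a b) (u b c) (u c d) (u d a) (u a c) (u b d)
      (h1 a b) (h1 b c) (h1 c d) (h1 d a) (h1 a c) (h1 b d)
      (h0 a b) (h0 b c) (h0 c d) (h0 d a) (h0 a c) (h0 b d)
    have key1 := key_ineq1 (u a b) (u b c) (u c d) (u d a) (u a c) (u b d)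
      (h1 a b) (h1 b c) (h1 c d) (h1 d a) (h1 a c) (h1 b d)
      (h0 a b) (h0 b c) (h0 c d) (h0 d a) (h0 a c) (h0 b d)
    have key2 := key_ineq1 (u a b) (u b d) (u c d) (u a c) (u d a) (u b c)
      (h1 a b) (h1 b d) (h1 c d) (h1 a c) (h1 d a) (h1 b c)
      (h0 a b) (h0 b d) (h0 c d) (h0 a c) (h0 d a) (h0 b c)
    rw [hsym d c, hsym c a, hsym a d] at *
    split_ifs with hc1 hc2 hc2
    · linarith [key]
    · linarith [key1]
    · linarith [key2]
    · simp [mul_nonneg (h0 a b) (h0 c d)]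
  -- weight function
  set w : (Fin n × Fin n × Fin n × Fin n) → ℝ :=
    fun q => u q.1 q.2.1 * u q.2.2.1 q.2.2.2 with hw
  have step4 : ∑ q ∈ S, F q ≤ (∑ q ∈ S, w q) / 2 := by
    have h2 : (∑ q ∈ S, F q) * 2 = ∑ q ∈ S, (F q + F (φ q)) := by
      rw [Finset.sum_add_distrib, ← step2]; ring
    have h3 : ∑ q ∈ S, (F q + F (φ q)) ≤ ∑ q ∈ S, w q :=
      Finset.sum_le_sum step3
    linarith
  -- embed into E ×ˢ E
  set g : (Fin n × Fin n × Fin n × Fin n) → ((Fin n × Fin n) × (Fin n × Fin n)) :=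
    fun q => ((q.1, q.2.1), (q.2.2.1, q.2.2.2)) with hg
  have hginj : Set.InjOn g S := by
    intro q _ q' _ h
    obtain ⟨a, b, c, d⟩ := q; obtain ⟨a', b', c', d'⟩ := q'
    simp only [hg, Prod.mk.injEq] at h
    simp [h.1.1, h.1.2, h.2.1, h.2.2]
  have step5 : ∑ q ∈ S, w q ≤ ∑ p ∈ E ×ˢ E, u p.1.1 p.1.2 * u p.2.1 p.2.2 := by
    have him : S.image g ⊆ E ×ˢ E := by
      intro p hp
      rw [Finset.mem_image] at hp
      obtain ⟨q, hq, rfl⟩ := hp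
      rw [hS, Finset.mem_filter] at hq
      obtain ⟨-, d1, d2, d3, d4, d5, d6, l1, l2⟩ := hq
      rw [Finset.mem_product, hE, Finset.mem_filter, Finset.mem_filter]
      exact ⟨⟨Finset.mem_univ _, l1, d1⟩, ⟨Finset.mem_univ _, l2, d6⟩⟩
    calc ∑ q ∈ S, w q = ∑ p ∈ S.image g, u p.1.1 p.1.2 * u p.2.1 p.2.2 :=
          (Finset.sum_image (f := fun p : (Fin n × Fin n) × (Fin n × Fin n) =>
            u p.1.1 p.1.2 * u p.2.1 p.2.2) (fun x hx y hy h => hginj hx hy h)).symm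
      _ ≤ ∑ p ∈ E ×ˢ E, u p.1.1 p.1.2 * u p.2.1 p.2.2 := by
          apply Finset.sum_le_sum_of_subset_of_nonneg him
          intro p _ _
          exact mul_nonneg (h0 _ _) (h0 _ _)
  have step6 : ∑ p ∈ E ×ˢ E, u p.1.1 p.1.2 * u p.2.1 p.2.2
      = (∑ e ∈ E, u e.1 e.2) ^ 2 := by
    rw [sq, Finset.sum_mul_sum, ← Finset.sum_product']
  rw [step1]
  calc ∑ q ∈ S, F q ≤ (∑ q ∈ S, w q) / 2 := step4
    _ ≤ (∑ p ∈ E ×ˢ E, u p.1.1 p.1.2 * u p.2.1 p.2.2) / 2 := by linarith [step5]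
    _ = (∑ e ∈ E, u e.1 e.2) ^ 2 / 2 := by rw [step6]
end

section
/- Let μ_1, …, μ_n be probability measures on spaces Ω_1, …, Ω_n and μ = Π μ_i their product. Let A_1, …, A_m be nonempty subsets of [n] such that every j ∈ [n] belongs to at most two of the sets A_i. For each i let f_i be a square-integrable function on Ω_{A_i} = Π_{j∈A_i} Ω_j with respect to μ_{A_i} = Π_{j∈A_i} μ_j. Then ∫ Π_{i=1}^m |f_i| dμ ≤ Π_{i=1}^m (∫ |f_i|² dμ_{A_i})^{1/2}. -/
open MeasureTheory ENNReal

private lemma sq_rpow_half (c : ℝ≥0∞) : (c ^ 2) ^ (1/2 : ℝ) = c := by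
  rw [← ENNReal.rpow_natCast c 2, ← ENNReal.rpow_mul]
  norm_num

private lemma cs_le_two {α ι : Type*} [DecidableEq ι] [MeasurableSpace α] (ν : Measure α)
    [IsProbabilityMeasure ν]
    (S : Finset ι) (hS : S.card ≤ 2) (g : ι → α → ℝ≥0∞) (hg : ∀ i, Measurable (g i)) :
    ∫⁻ y, ∏ i ∈ S, g i y ∂ν ≤ ∏ i ∈ S, (∫⁻ y, (g i y) ^ 2 ∂ν) ^ (1/2 : ℝ) := by
  have hconj : (2 : ℝ).HolderConjugate 2 := Real.HolderConjugate.two_two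
  interval_cases h : S.card
  · obtain rfl := Finset.card_eq_zero.mp h
    simp
  · obtain ⟨a, hSe⟩ := Finset.card_eq_one.mp h
    rw [hSe]
    simp only [Finset.prod_singleton]
    have := ENNReal.lintegral_mul_le_Lp_mul_Lq ν hconj (hg a).aemeasurable
      (aemeasurable_const (b := (1:ℝ≥0∞)))
    simp only [Pi.mul_apply, mul_one, ENNReal.one_rpow, lintegral_const, measure_univ,
      ENNReal.one_rpow] at this
    have h2 : ∀ x : ENNReal, x ^ (2:ℝ) = x ^ (2:ℕ) := fun x => by
      rw [← ENNReal.rpow_natCast x 2]; norm_num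
    simp only [h2] at this
    simpa using this
  · obtain ⟨a, b, hab, hSe⟩ := Finset.card_eq_two.mp h
    rw [hSe, Finset.prod_pair hab]
    simp only [Finset.prod_pair hab]
    have := ENNReal.lintegral_mul_le_Lp_mul_Lq ν hconj (hg a).aemeasurable (hg b).aemeasurable
    simp only [Pi.mul_apply] at this
    calc ∫⁻ y, g a y * g b y ∂ν
        ≤ (∫⁻ y, g a y ^ (2:ℝ) ∂ν) ^ (1/2:ℝ) * (∫⁻ y, g b y ^ (2:ℝ) ∂ν) ^ (1/2:ℝ) := this
      _ = (∫⁻ y, g a y ^ 2 ∂ν) ^ (1/2:ℝ) * (∫⁻ y, g b y ^ 2 ∂ν) ^ (1/2:ℝ) := by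
          have h2 : ∀ x : ENNReal, x ^ (2:ℝ) = x ^ (2:ℕ) := fun x => by
            rw [← ENNReal.rpow_natCast x 2]; norm_num
          simp only [h2]

universe u

private theorem finner_aux {m : ℕ} (n : ℕ) :
    ∀ (Ω : Fin n → Type u) [inst : ∀ j, MeasurableSpace (Ω j)]
      (μ : ∀ j, Measure (Ω j)) [prob : ∀ j, IsProbabilityMeasure (μ j)]
      (A : Fin m → Finset (Fin n))
      (_ : ∀ j : Fin n, (Finset.univ.filter (fun i => j ∈ A i)).card ≤ 2)
      (F : Fin m → (∀ j, Ω j) → ℝ≥0∞) (_ : ∀ i, Measurable (F i))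
      (_ : ∀ i, ∀ ω ω' : (∀ j, Ω j), (∀ j ∈ A i, ω j = ω' j) → F i ω = F i ω'),
    ∫⁻ ω, ∏ i, F i ω ∂(Measure.pi μ)
      ≤ ∏ i, (∫⁻ ω, (F i ω) ^ 2 ∂(Measure.pi μ)) ^ (1/2 : ℝ) := by
  induction n with
  | zero =>
    intro Ω inst μ prob A hA2 F hF hdep
    have hconst : ∀ i (ω : ∀ j, Ω j), F i ω = F i (fun j => j.elim0) := fun i ω =>
      hdep i ω _ (fun j _ => j.elim0)
    have h1 : ∫⁻ ω, ∏ i, F i ω ∂(Measure.pi μ) = ∏ i, F i (fun j => j.elim0) := by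
      rw [lintegral_congr (fun ω => Finset.prod_congr rfl fun i _ => hconst i ω),
        lintegral_const, measure_univ, mul_one]
    have h2 : ∀ i, ∫⁻ ω, (F i ω) ^ 2 ∂(Measure.pi μ) = (F i (fun j => j.elim0)) ^ 2 := by
      intro i
      rw [lintegral_congr (fun ω => by rw [hconst i ω]), lintegral_const, measure_univ, mul_one]
    rw [h1]
    refine le_of_eq (Finset.prod_congr rfl fun i _ => ?_)
    rw [h2 i, sq_rpow_half]
  | succ n ih =>
    intro Ω inst μ prob A hA2 F hF hdep
    set l : Fin (n+1) := Fin.last n with hl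
    set ν := μ l with hν
    set Ω' : Fin n → Type u := fun j => Ω (l.succAbove j) with hΩ'
    set μ' : ∀ j, Measure (Ω' j) := fun j => μ (l.succAbove j) with hμ'
    haveI : ∀ j, IsProbabilityMeasure (μ' j) := fun j => prob _
    set π := Measure.pi μ' with hπ
    set e := MeasurableEquiv.piFinSuccAbove Ω l with he
    have hmp : MeasurePreserving e (Measure.pi μ) (ν.prod π) :=
      measurePreserving_piFinSuccAbove μ l
    have hmps : MeasurePreserving e.symm (ν.prod π) (Measure.pi μ) := hmp.symm e
    have hsymm : ∀ (y : Ω l) (x : ∀ j, Ω' j), e.symm (y, x) = Fin.insertNth l y x :=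
      fun y x => rfl
    have hFm : ∀ i, Measurable (fun p : Ω l × (∀ j, Ω' j) => F i (e.symm p)) :=
      fun i => (hF i).comp e.symm.measurable
    set G : Fin m → (∀ j, Ω' j) → ℝ≥0∞ :=
      fun i x => (∫⁻ y, (F i (e.symm (y, x))) ^ 2 ∂ν) ^ (1/2 : ℝ) with hG
    have hGm : ∀ i, Measurable (G i) :=
      fun i => (Measurable.lintegral_prod_left' ((hFm i).pow_const 2)).pow_const _
    set A' : Fin m → Finset (Fin n) :=
      fun i => Finset.univ.filter (fun j => l.succAbove j ∈ A i) with hA'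
    have hA2' : ∀ j : Fin n, (Finset.univ.filter (fun i => j ∈ A' i)).card ≤ 2 := by
      intro j
      have : (Finset.univ.filter (fun i => j ∈ A' i))
          = (Finset.univ.filter (fun i => l.succAbove j ∈ A i)) := by
        apply Finset.filter_congr
        intro i _
        simp [hA']
      rw [this]
      exact hA2 (l.succAbove j)
    have hGdep : ∀ i, ∀ x x' : (∀ j, Ω' j), (∀ j ∈ A' i, x j = x' j) → G i x = G i x' := by
      intro i x x' hxx
      simp only [hG]
      congr 1
      apply lintegral_congr
      intro y
      congr 1
      apply hdep
      intro k hk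
      rcases eq_or_ne k l with rfl | hkl
      · rw [hsymm, hsymm, Fin.insertNth_apply_same, Fin.insertNth_apply_same]
      · obtain ⟨j, rfl⟩ := Fin.exists_succAbove_eq hkl
        rw [hsymm, hsymm, Fin.insertNth_apply_succAbove, Fin.insertNth_apply_succAbove]
        exact hxx j (by simp [hA', hk])
    -- Step 1: Fubini
    have hprodm : Measurable (fun p : Ω l × (∀ j, Ω' j) => ∏ i, F i (e.symm p)) :=
      Finset.measurable_prod _ (fun i _ => hFm i)
    have h1 : ∫⁻ ω, ∏ i, F i ω ∂(Measure.pi μ)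
        = ∫⁻ x, ∫⁻ y, ∏ i, F i (e.symm (y, x)) ∂ν ∂π := by
      rw [← hmps.lintegral_comp (Finset.measurable_prod _ (fun i _ => hF i))]
      exact lintegral_prod_symm _ hprodm.aemeasurable
    -- Step 2: pointwise bound of the inner integral
    set S : Finset (Fin m) := Finset.univ.filter (fun i => l ∈ A i) with hSdef
    have hconst : ∀ i, i ∈ Sᶜ → ∀ (x : ∀ j, Ω' j) (y : Ω l), F i (e.symm (y, x)) = G i x := by
      intro i hi x y
      have hlA : l ∉ A i := by
        simp only [hSdef, Finset.mem_compl, Finset.mem_filter, Finset.mem_univ, true_and] at hi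
        exact hi
      have hcst : ∀ y' : Ω l, F i (e.symm (y', x)) = F i (e.symm (y, x)) := by
        intro y'
        apply hdep
        intro k hk
        have hkl : k ≠ l := fun h => hlA (h ▸ hk)
        obtain ⟨j, rfl⟩ := Fin.exists_succAbove_eq hkl
        rw [hsymm, hsymm, Fin.insertNth_apply_succAbove, Fin.insertNth_apply_succAbove]
      simp only [hG]
      rw [lintegral_congr (fun y' => by rw [hcst y']), lintegral_const, measure_univ, mul_one,
        sq_rpow_half]
    have h2 : ∀ x, ∫⁻ y, ∏ i, F i (e.symm (y, x)) ∂ν ≤ ∏ i, G i x := by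
      intro x
      have hsplit : ∀ y : Ω l, ∏ i, F i (e.symm (y, x))
          = (∏ i ∈ Sᶜ, G i x) * ∏ i ∈ S, F i (e.symm (y, x)) := by
        intro y
        rw [← Finset.prod_mul_prod_compl S (fun i => F i (e.symm (y, x))), mul_comm]
        congr 1
        exact Finset.prod_congr rfl (fun i hi => hconst i hi x y)
      calc ∫⁻ y, ∏ i, F i (e.symm (y, x)) ∂ν
          = (∏ i ∈ Sᶜ, G i x) * ∫⁻ y, ∏ i ∈ S, F i (e.symm (y, x)) ∂ν := by
            simp_rw [hsplit]
            exact lintegral_const_mul _ (Finset.measurable_prod _ (fun i _ =>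
              (hF i).comp (e.symm.measurable.comp (measurable_id.prodMk measurable_const))))
        _ ≤ (∏ i ∈ Sᶜ, G i x) * ∏ i ∈ S, (∫⁻ y, (F i (e.symm (y, x))) ^ 2 ∂ν) ^ (1/2 : ℝ) := by
            refine mul_le_mul_right ?_ _
            refine cs_le_two ν S ?_ _ (fun i =>
              (hF i).comp (e.symm.measurable.comp (measurable_id.prodMk measurable_const)))
            exact hA2 l
        _ = ∏ i, G i x := by
            rw [mul_comm, Finset.prod_mul_prod_compl S (G · x)]
    -- Step 3: apply induction hypothesis
    have h3 : ∫⁻ x, ∏ i, G i x ∂π ≤ ∏ i, (∫⁻ x, (G i x) ^ 2 ∂π) ^ (1/2 : ℝ) :=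
      ih Ω' μ' A' hA2' G hGm hGdep
    -- Step 4: identify the L² norms
    have h4 : ∀ i, ∫⁻ x, (G i x) ^ 2 ∂π = ∫⁻ ω, (F i ω) ^ 2 ∂(Measure.pi μ) := by
      intro i
      have hGsq : ∀ x, (G i x) ^ 2 = ∫⁻ y, (F i (e.symm (y, x))) ^ 2 ∂ν := by
        intro x
        simp only [hG]
        rw [← ENNReal.rpow_natCast _ 2, ← ENNReal.rpow_mul]
        norm_num
      simp_rw [hGsq]
      rw [← lintegral_prod_symm _ ((hFm i).pow_const 2).aemeasurable,
        hmps.lintegral_comp ((hF i).pow_const 2)]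
    calc ∫⁻ ω, ∏ i, F i ω ∂(Measure.pi μ)
        = ∫⁻ x, ∫⁻ y, ∏ i, F i (e.symm (y, x)) ∂ν ∂π := h1
      _ ≤ ∫⁻ x, ∏ i, G i x ∂π := lintegral_mono h2
      _ ≤ ∏ i, (∫⁻ x, (G i x) ^ 2 ∂π) ^ (1/2 : ℝ) := h3
      _ = ∏ i, (∫⁻ ω, (F i ω) ^ 2 ∂(Measure.pi μ)) ^ (1/2 : ℝ) := by
          exact Finset.prod_congr rfl (fun i _ => by rw [h4 i])

/-- the generalized Hölder inequality with all exponents equal to 2.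
If each coordinate j ∈ [n] belongs to at most two of the index sets A_i, and each
f_i is a square-integrable function depending only on the coordinates in A_i, then
∫ Π |f_i| dμ ≤ Π (∫ f_i² dμ_{A_i})^{1/2}. -/
theorem stmt_19 {n m : ℕ} {Ω : Fin n → Type*} [∀ j, MeasurableSpace (Ω j)]
    (μ : ∀ j, Measure (Ω j)) [∀ j, IsProbabilityMeasure (μ j)]
    (A : Fin m → Finset (Fin n)) (hA : ∀ i, (A i).Nonempty)
    (hA2 : ∀ j : Fin n, (Finset.univ.filter (fun i => j ∈ A i)).card ≤ 2)
    (f : Fin m → ((∀ j, Ω j) → ℝ))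
    (hf : ∀ i, Measurable (f i))
    (hdep : ∀ i, ∀ ω ω' : (∀ j, Ω j), (∀ j ∈ A i, ω j = ω' j) → f i ω = f i ω')
    (hsq : ∀ i, Integrable (fun ω => (f i ω) ^ 2) (Measure.pi μ)) :
    ∫ ω, ∏ i, |f i ω| ∂(Measure.pi μ)
      ≤ ∏ i, Real.sqrt (∫ ω, (f i ω) ^ 2 ∂(Measure.pi μ)) := by
  set F : Fin m → (∀ j, Ω j) → ℝ≥0∞ := fun i ω => ENNReal.ofReal (|f i ω|) with hFdef
  have hFm : ∀ i, Measurable (F i) := fun i => (hf i).abs.ennreal_ofReal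
  have hFdep : ∀ i, ∀ ω ω' : (∀ j, Ω j), (∀ j ∈ A i, ω j = ω' j) → F i ω = F i ω' :=
    fun i ω ω' h => by simp only [hFdef, hdep i ω ω' h]
  have key := finner_aux n Ω μ A hA2 F hFm hFdep
  have hmeasprod : AEStronglyMeasurable (fun ω => ∏ i, |f i ω|) (Measure.pi μ) :=
    (Finset.measurable_prod _ (fun i _ => (hf i).abs)).aestronglyMeasurable
  have hL : ∫ ω, ∏ i, |f i ω| ∂(Measure.pi μ)
      = (∫⁻ ω, ∏ i, F i ω ∂(Measure.pi μ)).toReal := by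
    rw [integral_eq_lintegral_of_nonneg_ae
      (Filter.Eventually.of_forall fun ω => Finset.prod_nonneg fun i _ => abs_nonneg _) hmeasprod]
    congr 1
    apply lintegral_congr
    intro ω
    rw [ENNReal.ofReal_prod_of_nonneg (fun i _ => abs_nonneg _)]
  have hsqlint : ∀ i, ∫⁻ ω, (F i ω) ^ 2 ∂(Measure.pi μ)
      = ∫⁻ ω, ENNReal.ofReal ((f i ω) ^ 2) ∂(Measure.pi μ) := by
    intro i
    apply lintegral_congr
    intro ω
    simp only [hFdef]
    rw [← ENNReal.ofReal_pow (abs_nonneg _), sq_abs]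
  have hfin : ∀ i, ∫⁻ ω, (F i ω) ^ 2 ∂(Measure.pi μ) ≠ ⊤ := by
    intro i
    rw [hsqlint i]
    exact (hsq i).lintegral_lt_top.ne
  have hR : ∀ i, Real.sqrt (∫ ω, (f i ω) ^ 2 ∂(Measure.pi μ))
      = ((∫⁻ ω, (F i ω) ^ 2 ∂(Measure.pi μ)) ^ (1/2 : ℝ)).toReal := by
    intro i
    rw [integral_eq_lintegral_of_nonneg_ae (Filter.Eventually.of_forall fun ω => sq_nonneg _)
      ((hf i).pow_const 2).aestronglyMeasurable, Real.sqrt_eq_rpow, ENNReal.toReal_rpow,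
      hsqlint i]
  rw [hL]
  have hRfin : ∀ i, (∫⁻ ω, (F i ω) ^ 2 ∂(Measure.pi μ)) ^ (1/2 : ℝ) ≠ ⊤ :=
    fun i => ENNReal.rpow_ne_top_of_nonneg (by norm_num) (hfin i)
  calc (∫⁻ ω, ∏ i, F i ω ∂(Measure.pi μ)).toReal
      ≤ (∏ i, (∫⁻ ω, (F i ω) ^ 2 ∂(Measure.pi μ)) ^ (1/2 : ℝ)).toReal :=
        ENNReal.toReal_mono (ENNReal.prod_ne_top (fun i _ => hRfin i)) key
    _ = ∏ i, ((∫⁻ ω, (F i ω) ^ 2 ∂(Measure.pi μ)) ^ (1/2 : ℝ)).toReal := ENNReal.toReal_prod _ _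
    _ = ∏ i, Real.sqrt (∫ ω, (f i ω) ^ 2 ∂(Measure.pi μ)) :=
        Finset.prod_congr rfl (fun i _ => (hR i).symm)
end
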